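/- arXiv:2305.15600 — 9 statements merged into one kernel-verified Lean document; each statement's English description precedes it below -/
import Mathlib

section
/- If A and B are matroids on the same ground set and every flat of B is a flat of A (i.e., there is a strong map A → B), then every independent set of B is an independent set of A (i.e., there is a weak map A → B). -/
open Set

lemma my_closure_flat {α : Type*} (M : Matroid α) (X : Set α) : M.IsFlat (M.closure X) := by
  have hne : Nonempty {F // M.IsFlat F ∧ X ∩ M.E ⊆ F} :=
    ⟨⟨M.E, M.ground_isFlat, inter_subset_right⟩⟩
  have : M.closure X = ⋂ F : {F // M.IsFlat F ∧ X ∩ M.E ⊆ F}, F.1 := by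
    rw [Matroid.closure_def, sInter_eq_iInter]
    exact iInter_congr fun _ ↦ rfl
  rw [this]
  exact Matroid.IsFlat.iInter fun F ↦ F.2.1

/-- If `A` and `B` are matroids on the same ground set and every
flat of `B` is a flat of `A` (a strong map `A → B`), then every independent
set of `B` is independent in `A` (a weak map `A → B`). -/
theorem stmt2 {α : Type*} (A B : Matroid α) [A.Finite] [B.Finite]
    (hE : A.E = B.E) (hstrong : ∀ F : Set α, B.IsFlat F → A.IsFlat F) :
    ∀ I : Set α, B.Indep I → A.Indep I := by
  have hcl : ∀ X : Set α, X ⊆ B.E → A.closure X ⊆ B.closure X := by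
    intro X hX
    have hF : A.IsFlat (B.closure X) := hstrong _ (my_closure_flat B X)
    have : A.closure X ⊆ A.closure (B.closure X) :=
      A.closure_subset_closure (B.subset_closure X hX)
    rwa [hF.closure] at this
  intro I hI
  have hIE : I ⊆ A.E := hE ▸ hI.subset_ground
  obtain ⟨J, hJ⟩ := A.exists_isBasis I hIE
  have hJI : J = I := by
    by_contra hne
    obtain ⟨x, hxI, hxJ⟩ := Set.exists_of_ssubset (hJ.subset.ssubset_of_ne hne)
    have hx : x ∈ A.closure J := hJ.subset_closure hxI
    have hx' : x ∈ B.closure J := hcl J (hJ.subset.trans hI.subset_ground) hx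
    have : x ∈ B.closure (I \ {x}) :=
      B.closure_subset_closure (Set.subset_diff_singleton hJ.subset hxJ) hx'
    exact hI.notMem_closure_diff_of_mem hxI this
  exact hJI ▸ hJ.indep
end

section
/- If A → B is a rank-preserving weak map of matroids of rank r+1, then for every subset S ⊆ [r], the flag f-number f_S of the lattice of flats of A is at least the flag f-number f_S of the lattice of flats of B. -/
/-- The rank of a set `X` in a matroid `M`. -/
noncomputable def mrk {α : Type*} (M : Matroid α) (X : Set α) : ℕ :=
  sSup {n | ∃ I, M.Indep I ∧ I ⊆ X ∧ I.ncard = n}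

/-- A chain of flats of `M` lying strictly between the minimal flat and the
ground set, totally ordered by inclusion. -/
def IsFlatChain {α : Type*} (M : Matroid α) (C : Set (Set α)) : Prop :=
  (∀ F ∈ C, M.IsFlat F ∧ F ≠ M.closure ∅ ∧ F ≠ M.E) ∧ IsChain (· ⊆ ·) C

/-- The flag `f`-number `f_S(M)`: the number of chains of (proper, nontrivial)
flats of `M` whose set of ranks is exactly `S`. -/
noncomputable def flagF {α : Type*} (M : Matroid α) (S : Set ℕ) : ℕ :=
  {C : Set (Set α) | IsFlatChain M C ∧ (fun F => mrk M F) '' C = S}.ncard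


open Set

namespace Stmt7Aux

variable {α : Type*}

/-- The closure of any set is a flat. -/
lemma flat_closure' (M : Matroid α) (X : Set α) : M.IsFlat (M.closure X) := by
  refine ⟨fun I Y hI hIY => ?_, M.closure_subset_ground X⟩
  have h1 : Y ⊆ M.closure I := hIY.subset_closure
  rwa [hI.closure_eq_closure, M.closure_closure] at h1

/-- A finite chain of sets has a top element. -/
lemma chain_exists_top {𝒞 : Set (Set α)} (hfin : 𝒞.Finite) (hne : 𝒞.Nonempty)
    (hchain : IsChain (· ⊆ ·) 𝒞) : ∃ T ∈ 𝒞, ∀ F ∈ 𝒞, F ⊆ T := by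
  obtain ⟨T, hT, hmax⟩ := hfin.exists_maximal hne
  refine ⟨T, hT, fun F hF => ?_⟩
  rcases eq_or_ne F T with rfl | hFne
  · exact Subset.rfl
  rcases hchain hF hT hFne with h | h
  · exact h
  · exact hmax hF h

/-- A finite chain of subsets of the ground set admits a compatible nested family
of bases. -/
lemma exists_nested_basis (M : Matroid α) (n : ℕ) :
    ∀ (𝒞 : Set (Set α)), 𝒞.Finite → 𝒞.ncard = n → IsChain (· ⊆ ·) 𝒞 →
      (∀ F ∈ 𝒞, F ⊆ M.E) →
      ∃ ι : Set α → Set α, (∀ F ∈ 𝒞, M.IsBasis (ι F) F) ∧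
        (∀ F ∈ 𝒞, ∀ G ∈ 𝒞, F ⊆ G → ι F ⊆ ι G) := by
  induction n using Nat.strong_induction_on with
  | _ n IH =>
    intro 𝒞 hfin hcard hchain hE
    classical
    rcases eq_empty_or_nonempty 𝒞 with rfl | hne
    · exact ⟨fun _ => ∅, by simp, by simp⟩
    obtain ⟨Fmax, hFmax, hFtop⟩ := chain_exists_top hfin hne hchain
    set 𝒞' := 𝒞 \ {Fmax} with h𝒞'
    have hsub' : 𝒞' ⊆ 𝒞 := diff_subset
    have hlt : 𝒞'.ncard < n := hcard ▸ Set.ncard_diff_singleton_lt_of_mem hFmax hfin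
    have hfin' : 𝒞'.Finite := hfin.subset hsub'
    obtain ⟨ι', hι'b, hι'm⟩ := IH _ hlt 𝒞' hfin' rfl (hchain.mono hsub')
      (fun F hF => hE F (hsub' hF))
    have hmem' : ∀ F ∈ 𝒞, F ≠ Fmax → F ∈ 𝒞' := fun F hF hne' => ⟨hF, hne'⟩
    rcases eq_empty_or_nonempty 𝒞' with h'empty | h'ne
    · -- 𝒞 = {Fmax}
      obtain ⟨J, hJ⟩ := M.exists_isBasis Fmax (hE Fmax hFmax)
      refine ⟨fun F => if F = Fmax then J else ∅, ?_, ?_⟩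
      · intro F hF
        by_cases hne' : F = Fmax
        · subst hne'; simpa using hJ
        · exact absurd (hmem' F hF hne') (by simp [h'empty])
      · intro F hF G hG hFG
        have hF' : F = Fmax := by
          by_contra h; exact absurd (hmem' F hF h) (by simp [h'empty])
        have hG' : G = Fmax := by
          by_contra h; exact absurd (hmem' G hG h) (by simp [h'empty])
        simp [hF', hG']
    · obtain ⟨F'', hF'', hFtop'⟩ := chain_exists_top hfin' h'ne
        ((hchain.mono hsub'))
      have hb'' := hι'b F'' hF''
      obtain ⟨J, hJ, hsubJ⟩ := hb''.indep.subset_isBasis_of_subset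
        (hb''.subset.trans (hFtop F'' (hsub' hF''))) (hE Fmax hFmax)
      refine ⟨fun F => if F = Fmax then J else ι' F, ?_, ?_⟩
      · intro F hF
        by_cases hne' : F = Fmax
        · subst hne'; simpa using hJ
        · simp only [if_neg hne']; exact hι'b F (hmem' F hF hne')
      · intro F hF G hG hFG
        by_cases hFeq : F = Fmax
        · by_cases hGeq : G = Fmax
          · simp [hFeq, hGeq]
          · have hGF : G = Fmax := Subset.antisymm (hFtop G hG) (hFeq ▸ hFG)
            exact absurd hGF hGeq
        · by_cases hGeq : G = Fmax
          · have h1 : ι' F ⊆ ι' F'' :=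
              hι'm F (hmem' F hF hFeq) F'' hF'' (hFtop' F (hmem' F hF hFeq))
            simp only [if_neg hFeq, if_pos hGeq]
            exact h1.trans hsubJ
          · simp only [if_neg hFeq, if_neg hGeq]
            exact hι'm F (hmem' F hF hFeq) G (hmem' G hG hGeq) hFG

/-- The value of `mrk` on a set with a basis. -/
lemma mrk_eq_of_basis {M : Matroid α} [M.Finite] {I X : Set α} (hIX : M.IsBasis I X) :
    mrk M X = I.ncard := by
  have hXE : X ⊆ M.E := hIX.subset_ground
  have hIfin : I.Finite := M.ground_finite.subset hIX.indep.subset_ground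
  apply IsGreatest.csSup_eq
  constructor
  · exact ⟨I, hIX.indep, hIX.subset, rfl⟩
  · rintro n ⟨J, hJ, hJX, rfl⟩
    obtain ⟨J', hJ', hJJ'⟩ := hJ.subset_isBasis_of_subset hJX hXE
    have h1 : J.encard ≤ I.encard := by
      calc J.encard ≤ J'.encard := encard_mono hJJ'
        _ = I.encard := hJ'.encard_eq_encard hIX
    rw [ncard_def, ncard_def]
    exact ENat.toNat_le_toNat h1 hIfin.encard_lt_top.ne

/-- Two flats of `B` whose `B`-bases have the same `A`-closure are equal
(one-sided version). -/
lemma flat_subset_of_closure_eq {A B : Matroid α}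
    (hE : A.E = B.E) (hweak : ∀ I : Set α, B.Indep I → A.Indep I)
    {I I' F F' : Set α} (hF : B.IsFlat F) (hF' : B.IsFlat F')
    (hIF : B.IsBasis I F) (hI'F' : B.IsBasis I' F')
    (hcl : A.closure I = A.closure I') : F' ⊆ F := by
  have hI'E : I' ⊆ B.E := hI'F'.indep.subset_ground
  have hI'sub : I' ⊆ F := by
    by_contra hns
    obtain ⟨x, hxI', hxF⟩ := not_subset.1 hns
    have hxE : x ∈ B.E := hI'E hxI'
    have hxcl : x ∉ B.closure I := by
      rw [hIF.closure_eq_closure, hF.closure]; exact hxF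
    have hxI : x ∉ I := fun h => hxF (hIF.subset h)
    have hBind : B.Indep (insert x I) := by
      rw [hIF.indep.insert_indep_iff_of_notMem hxI]
      exact ⟨hxE, hxcl⟩
    have hAind : A.Indep (insert x I) := hweak _ hBind
    have hxAcl : x ∈ A.closure I := by
      rw [hcl]
      exact A.subset_closure I' (by rw [hE]; exact hI'E) hxI'
    have h2 := ((hweak _ hIF.indep).insert_indep_iff_of_notMem hxI).1 hAind
    exact h2.2 hxAcl
  calc F' = B.closure I' := by rw [hI'F'.closure_eq_closure, hF'.closure]
    _ ⊆ B.closure F := B.closure_subset_closure hI'sub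
    _ = F := hF.closure

end Stmt7Aux

/-- If `A → B` is a rank-preserving weak map of matroids of rank
`r+1`, then for every `S ⊆ [r]`, the flag `f`-number `f_S` of the lattice of
flats of `A` is at least that of `B`. -/
theorem stmt7 {α : Type*} (A B : Matroid α) [A.Finite] [B.Finite] {r : ℕ}
    (hE : A.E = B.E) (hweak : ∀ I : Set α, B.Indep I → A.Indep I)
    (hrkA : mrk A A.E = r + 1) (hrkB : mrk B B.E = r + 1)
    (S : Set ℕ) (hS : S ⊆ Set.Icc 1 r) :
    flagF B S ≤ flagF A S := by
  classical
  have hexB : ∀ C : Set (Set α), IsFlatChain B C →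
      ∃ ι : Set α → Set α, (∀ F ∈ C, B.IsBasis (ι F) F) ∧
        (∀ F ∈ C, ∀ G ∈ C, F ⊆ G → ι F ⊆ ι G) := by
    intro C hC
    have hCfin : C.Finite :=
      (B.ground_finite.finite_subsets).subset (fun F hF => (hC.1 F hF).1.subset_ground)
    exact Stmt7Aux.exists_nested_basis B C.ncard C hCfin rfl hC.2
      (fun F hF => (hC.1 F hF).1.subset_ground)
  set ι : Set (Set α) → Set α → Set α := fun C =>
    if h : IsFlatChain B C then (hexB C h).choose else fun _ => ∅ with hι
  have hιb : ∀ C, IsFlatChain B C → ∀ F ∈ C, B.IsBasis (ι C F) F := by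
    intro C h
    rw [hι]; simp only [dif_pos h]; exact (hexB C h).choose_spec.1
  have hιm : ∀ C, IsFlatChain B C → ∀ F ∈ C, ∀ G ∈ C, F ⊆ G → ι C F ⊆ ι C G := by
    intro C h
    rw [hι]; simp only [dif_pos h]; exact (hexB C h).choose_spec.2
  set φ : Set (Set α) → Set (Set α) := fun C => (fun F => A.closure (ι C F)) '' C with hφ
  -- rank computations
  have hrkG : ∀ C, IsFlatChain B C → ∀ F ∈ C, mrk A (A.closure (ι C F)) = mrk B F := by
    intro C hC F hF
    have hbF := hιb C hC F hF
    have hAb : A.IsBasis (ι C F) (A.closure (ι C F)) := (hweak _ hbF.indep).isBasis_closure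
    rw [Stmt7Aux.mrk_eq_of_basis hAb, Stmt7Aux.mrk_eq_of_basis hbF]
  rw [flagF, flagF]
  have key : ∀ C C', (IsFlatChain B C ∧ (fun F => mrk B F) '' C = S) →
      (IsFlatChain B C' ∧ (fun F => mrk B F) '' C' = S) → φ C = φ C' → C ⊆ C' := by
    intro C C' hC hC' heq F hF
    have hGmem : A.closure (ι C F) ∈ φ C' := by
      rw [← heq]; exact ⟨F, hF, rfl⟩
    obtain ⟨F', hF', hGeq⟩ := hGmem
    have h1 : F ⊆ F' := Stmt7Aux.flat_subset_of_closure_eq hE hweak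
      (hC'.1.1 F' hF').1 (hC.1.1 F hF).1 (hιb C' hC'.1 F' hF') (hιb C hC.1 F hF) hGeq
    have h2 : F' ⊆ F := Stmt7Aux.flat_subset_of_closure_eq hE hweak
      (hC.1.1 F hF).1 (hC'.1.1 F' hF').1 (hιb C hC.1 F hF) (hιb C' hC'.1 F' hF') hGeq.symm
    rwa [Subset.antisymm h1 h2]
  refine Set.ncard_le_ncard_of_injOn φ ?_ ?_ ?_
  · -- maps to
    rintro C ⟨hC, hCS⟩
    have hmemS : ∀ F ∈ C, mrk B F ∈ S := by
      intro F hF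
      rw [← hCS]; exact ⟨F, hF, rfl⟩
    refine ⟨⟨?_, ?_⟩, ?_⟩
    · rintro G ⟨F, hF, rfl⟩
      have hrange : mrk B F ∈ Set.Icc 1 r := hS (hmemS F hF)
      refine ⟨Stmt7Aux.flat_closure' A _, ?_, ?_⟩
      · intro hbad
        have h0 : mrk A (A.closure ∅) = 0 := by
          rw [Stmt7Aux.mrk_eq_of_basis (A.empty_indep.isBasis_closure)]
          simp
        have h1 := hrkG C hC F hF
        dsimp only at hbad
        rw [hbad, h0] at h1
        have h2 := hrange.1
        omega
      · intro hbad
        have h1 := hrkG C hC F hF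
        dsimp only at hbad
        rw [hbad, hrkA] at h1
        have h2 := hrange.2
        omega
    · rintro G ⟨F, hF, rfl⟩ G' ⟨F', hF', rfl⟩ hne
      have hFF' : F ≠ F' := by rintro rfl; exact hne rfl
      rcases hC.2 hF hF' hFF' with h | h
      · exact Or.inl (A.closure_subset_closure (hιm C hC F hF F' hF' h))
      · exact Or.inr (A.closure_subset_closure (hιm C hC F' hF' F hF h))
    · rw [hφ]
      simp only [Set.image_image]
      rw [← hCS]
      exact Set.image_congr (fun F hF => hrkG C hC F hF)
  · -- injective
    intro C hC C' hC' heq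
    exact Subset.antisymm (key C C' hC hC' heq) (key C' C hC' hC heq.symm)
  · -- finiteness
    apply Set.Finite.subset (A.ground_finite.finite_subsets.finite_subsets)
    rintro C ⟨hC, -⟩
    intro F hF
    exact (hC.1 F hF).1.subset_ground
end

section
/- If A → B is a weak map of matroids, then for every k, the number of chains of length k in the proper part of the lattice of flats of A is at least the number of chains of length k in the proper part of the lattice of flats of B. -/
open Set

namespace WeakMapAux

variable {α : Type*}

/-- The closure of any set is a flat. -/
lemma flat_closure (M : Matroid α) (X : Set α) : M.IsFlat (M.closure X) := by
  rw [Matroid.isFlat_iff_isClosed]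
  refine ⟨M.closure_subset_ground X, ?_⟩
  have h := M.closure_eq_subtypeClosure X
  have := M.subtypeClosure.isClosed_closure ⟨X ∩ M.E, inter_subset_right⟩
  convert this using 1
  exact Subtype.ext h

/-- Key lemma: under a weak map, `A`-closures of `B`-independent sets are
contained in `B`-closures. -/
lemma weak_closure_subset {A B : Matroid α} (hE : A.E = B.E)
    (hweak : ∀ I : Set α, B.Indep I → A.Indep I) {I : Set α} (hI : B.Indep I) :
    A.closure I ⊆ B.closure I := by
  intro y hy
  have hIA : A.Indep I := hweak I hI
  have hyE : y ∈ B.E := hE ▸ (A.closure_subset_ground I hy)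
  rcases (hIA.mem_closure_iff).mp hy with hdep | hyI
  · refine (hI.mem_closure_iff).mpr (Or.inl ?_)
    refine ⟨fun h => hdep.1 (hweak _ h), insert_subset hyE hI.subset_ground⟩
  · exact B.subset_closure I hI.subset_ground hyI

lemma recovery {A B : Matroid α} (hE : A.E = B.E)
    (hweak : ∀ I : Set α, B.Indep I → A.Indep I) {I : Set α} (hI : B.Indep I) :
    B.closure (A.closure I) = B.closure I := by
  apply subset_antisymm
  · have h1 : A.closure I ⊆ B.closure I := weak_closure_subset hE hweak hI
    have := B.closure_subset_closure h1
    rwa [B.closure_closure] at this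
  · exact B.closure_subset_closure (A.subset_closure I (hE ▸ hI.subset_ground))

/-- Nested bases along a finite chain. -/
lemma exists_nested_bases (B : Matroid α) :
    ∀ (n : ℕ) (C : Set (Set α)), C.Finite → C.ncard = n → IsChain (· ⊆ ·) C →
      (∀ F ∈ C, F ⊆ B.E) →
      ∃ J : Set α → Set α, (∀ F ∈ C, B.IsBasis (J F) F) ∧
        ∀ F ∈ C, ∀ F' ∈ C, F ⊆ F' → J F ⊆ J F' := by
  intro n
  induction n with
  | zero =>
    intro C hfin hcard _ _
    rw [Set.ncard_eq_zero hfin] at hcard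
    subst hcard
    exact ⟨fun _ => ∅, by simp, by simp⟩
  | succ n ih =>
    intro C hfin hcard hchain hsub
    have hne : C.Nonempty := by
      rw [Set.nonempty_iff_ne_empty]
      rintro rfl; simp at hcard
    obtain ⟨m, hmC, hmax⟩ := Set.Finite.exists_maximalFor id C hfin hne
    have hmtop : ∀ x ∈ C, x ⊆ m := by
      intro x hx
      rcases eq_or_ne x m with rfl | hxm
      · exact Subset.rfl
      · rcases hchain hx hmC hxm with h | h
        · exact h
        · exact (hxm (subset_antisymm (hmax hx h) h)).elim
    set C' : Set (Set α) := C \ {m} with hC'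
    have hfin' : C'.Finite := hfin.subset diff_subset
    have hcard' : C'.ncard = n := by
      rw [hC', Set.ncard_diff_singleton_of_mem hmC, hcard]
      omega
    have hchain' : IsChain (· ⊆ ·) C' := hchain.mono diff_subset
    have hsub' : ∀ F ∈ C', F ⊆ B.E := fun F hF => hsub F hF.1
    obtain ⟨J', hJ'b, hJ'm⟩ := ih C' hfin' hcard' hchain' hsub'
    rcases C'.eq_empty_or_nonempty with hCe | hCne
    · -- C = {m}
      obtain ⟨Jm, hJm⟩ := B.exists_isBasis m (hsub m hmC)
      refine ⟨fun _ => Jm, ?_, ?_⟩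
      · intro F hF
        have : F = m := by
          by_contra h
          exact absurd (show F ∈ C' from ⟨hF, h⟩) (by rw [hCe]; simp)
        rwa [this]
      · intro _ _ _ _ _; exact Subset.rfl
    · obtain ⟨F₀, hF₀C, hF₀max⟩ := Set.Finite.exists_maximalFor id C' hfin' hCne
      have hF₀top : ∀ x ∈ C', x ⊆ F₀ := by
        intro x hx
        rcases eq_or_ne x F₀ with rfl | hxm
        · exact Subset.rfl
        · rcases hchain' hx hF₀C hxm with h | h
          · exact h
          · exact (hxm (subset_antisymm (hF₀max hx h) h)).elim
      obtain ⟨Jm, hJm, hJ'Jm⟩ := (hJ'b F₀ hF₀C).indep.subset_isBasis_of_subset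
        ((hJ'b F₀ hF₀C).subset.trans (hmtop F₀ hF₀C.1)) (hsub m hmC)
      classical
      refine ⟨fun F => if F = m then Jm else J' F, ?_, ?_⟩
      · intro F hF
        by_cases h : F = m
        · simpa [h]
        · simpa [h] using hJ'b F ⟨hF, h⟩
      · intro F hF F' hF' hFF'
        by_cases h : F = m
        · by_cases h' : F' = m
          · simp [h, h']
          · -- F = m ⊆ F' and F' ⊆ m, so F' = m, contradiction
            exact absurd (subset_antisymm (hmtop F' hF') (h ▸ hFF')) h'
        · by_cases h' : F' = m
          · simp only [if_neg h, if_pos h']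
            exact ((hJ'm F ⟨hF, h⟩ F₀ hF₀C (hF₀top F ⟨hF, h⟩))).trans hJ'Jm
          · simp only [if_neg h, if_neg h']
            exact hJ'm F ⟨hF, h⟩ F' ⟨hF', h'⟩ hFF'

end WeakMapAux

/-- `f_k(M)`: the number of chains consisting of `k` flats in the proper part
of the lattice of flats of `M`. -/
noncomputable def fNum {α : Type*} (M : Matroid α) (k : ℕ) : ℕ :=
  {C : Set (Set α) | IsFlatChain M C ∧ C.ncard = k}.ncard

/-- If `A → B` is a weak map of matroids, then for every `k`, the
number of chains of `k` flats in the proper part of the lattice of flats of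
`A` is at least the corresponding number for `B`. -/
theorem stmt8 {α : Type*} (A B : Matroid α) [A.Finite] [B.Finite]
    (hE : A.E = B.E) (hweak : ∀ I : Set α, B.Indep I → A.Indep I) :
    ∀ k : ℕ, fNum B k ≤ fNum A k := by
  classical
  intro k
  -- any flat chain of B is finite
  have hBfin : ∀ C : Set (Set α), IsFlatChain B C → C.Finite := by
    intro C hC
    exact (B.ground_finite.finite_subsets).subset
      (fun F hF => (hC.1 F hF).1.subset_ground)
  -- choose nested bases for each B flat chain
  have hJ : ∀ C : Set (Set α), IsFlatChain B C →
      ∃ J : Set α → Set α, (∀ F ∈ C, B.IsBasis (J F) F) ∧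
        ∀ F ∈ C, ∀ F' ∈ C, F ⊆ F' → J F ⊆ J F' := by
    intro C hC
    exact WeakMapAux.exists_nested_bases B (C.ncard) C (hBfin C hC) rfl hC.2
      (fun F hF => (hC.1 F hF).1.subset_ground)
  set JJ : Set (Set α) → Set α → Set α :=
    fun C => if h : IsFlatChain B C then Classical.choose (hJ C h) else fun _ => ∅ with hJJ
  have hJJspec : ∀ C : Set (Set α), (h : IsFlatChain B C) →
      (∀ F ∈ C, B.IsBasis (JJ C F) F) ∧
        ∀ F ∈ C, ∀ F' ∈ C, F ⊆ F' → JJ C F ⊆ JJ C F' := by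
    intro C h
    simp only [hJJ, dif_pos h]
    exact Classical.choose_spec (hJ C h)
  set Φ : Set (Set α) → Set (Set α) := fun C => (fun F => A.closure (JJ C F)) '' C with hΦ
  -- recovery: B.closure of each image element gives back the flat
  have hrec : ∀ C : Set (Set α), (h : IsFlatChain B C) → ∀ F ∈ C,
      B.closure (A.closure (JJ C F)) = F := by
    intro C h F hF
    have hb := (hJJspec C h).1 F hF
    rw [WeakMapAux.recovery hE hweak hb.indep, hb.closure_eq_closure, (h.1 F hF).1.closure]
  have hrecC : ∀ C : Set (Set α), IsFlatChain B C → B.closure '' (Φ C) = C := by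
    intro C h
    rw [hΦ]
    simp only [image_image]
    ext F
    constructor
    · rintro ⟨F', hF', rfl⟩
      show B.closure (A.closure (JJ C F')) ∈ C
      rw [hrec C h F' hF']; exact hF'
    · intro hF
      exact ⟨F, hF, hrec C h F hF⟩
  -- injectivity of the closure map on each chain
  have hinjOn : ∀ C : Set (Set α), IsFlatChain B C →
      Set.InjOn (fun F => A.closure (JJ C F)) C := by
    intro C h F hF F' hF' heq
    dsimp only at heq
    have := hrec C h F hF
    rw [heq, hrec C h F' hF'] at this
    exact this.symm
  have htfin : {C : Set (Set α) | IsFlatChain A C ∧ C.ncard = k}.Finite :=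
    ((A.ground_finite.finite_subsets).finite_subsets).subset
      (fun C hC F hF => (hC.1.1 F hF).1.subset_ground)
  refine Set.ncard_le_ncard_of_injOn Φ ?_ ?_ htfin
  · -- maps B-chains to A-chains
    rintro C ⟨hC, hCk⟩
    constructor
    · constructor
      · rintro G ⟨F, hF, rfl⟩
        refine ⟨WeakMapAux.flat_closure A _, ?_, ?_⟩
        · -- not the minimal flat of A
          intro hGbot
          dsimp only at hGbot
          have h1 := hrec C hC F hF
          rw [hGbot] at h1
          have h2 : B.closure (A.closure (∅ : Set α)) = B.closure ∅ := by
            apply subset_antisymm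
            · have h3 : A.closure (∅ : Set α) ⊆ B.closure ∅ :=
                WeakMapAux.weak_closure_subset hE hweak B.empty_indep
              have := B.closure_subset_closure h3
              rwa [B.closure_closure] at this
            · exact B.closure_subset_closure (empty_subset _)
          rw [h2] at h1
          exact (hC.1 F hF).2.1 h1.symm
        · -- not the ground set of A
          intro hGtop
          dsimp only at hGtop
          have h1 := hrec C hC F hF
          rw [hGtop, hE, B.closure_ground] at h1
          exact (hC.1 F hF).2.2 h1.symm
      · -- chain
        rintro G ⟨F, hF, rfl⟩ G' ⟨F', hF', rfl⟩ hne
        have hFF' : F ≠ F' := by rintro rfl; exact hne rfl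
        rcases hC.2 hF hF' hFF' with h | h
        · exact Or.inl (A.closure_subset_closure ((hJJspec C hC).2 F hF F' hF' h))
        · exact Or.inr (A.closure_subset_closure ((hJJspec C hC).2 F' hF' F hF h))
    · rw [hΦ]
      simp only
      rw [Set.ncard_image_of_injOn (hinjOn C hC)]
      exact hCk
  · -- injectivity
    rintro C ⟨hC, _⟩ C' ⟨hC', _⟩ heq
    have := hrecC C hC
    rw [heq, hrecC C' hC'] at this
    exact this.symm
end

section
/- If A → B is a rank-preserving weak map of matroids, then for every k, the h-number h_k of the independence complex of A is at least h_k of the independence complex of B. -/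
/-- `f_i` of the independence complex of `M`: the number of independent sets
of cardinality `i`. -/
noncomputable def fInd {α : Type*} (M : Matroid α) (i : ℕ) : ℕ :=
  {I : Set α | M.Indep I ∧ I.ncard = i}.ncard

/-- `h_k` of the independence complex of `M`, a complex of dimension `r − 1`
where `r = rk(M)`, via `h_k = ∑_{i ≤ k} (−1)^{k−i} C(r−i, k−i) f_i`. -/
noncomputable def hInd {α : Type*} (M : Matroid α) (k : ℕ) : ℤ :=
  ∑ i ∈ Finset.range (k + 1),
    (-1 : ℤ) ^ (k - i) * (Nat.choose (mrk M M.E - i) (k - i)) * (fInd M i)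

open Set Polynomial

namespace Stmt9

variable {α : Type*}

noncomputable def mrk' {α : Type*} (M : Matroid α) (X : Set α) : ℕ :=
  sSup {n | ∃ I, M.Indep I ∧ I ⊆ X ∧ I.ncard = n}

lemma indepSet_finite (M : Matroid α) [M.Finite] : {I | M.Indep I}.Finite := by
  have : {I | M.Indep I} ⊆ {I | I ⊆ M.E} := fun I hI => hI.subset_ground
  exact (M.ground_finite.finite_subsets).subset this

lemma bddAbove_cards (M : Matroid α) [M.Finite] :
    BddAbove {n | ∃ I, M.Indep I ∧ I ⊆ M.E ∧ I.ncard = n} := by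
  refine ⟨M.E.ncard, fun n hn => ?_⟩
  obtain ⟨I, hI, hIE, rfl⟩ := hn
  exact Set.ncard_le_ncard hIE M.ground_finite

lemma indep_ncard_le_mrk {M : Matroid α} [M.Finite] {I : Set α} (hI : M.Indep I) :
    I.ncard ≤ mrk' M M.E :=
  le_csSup (bddAbove_cards M) ⟨I, hI, hI.subset_ground, rfl⟩

lemma base_ncard {M : Matroid α} [M.Finite] {B : Set α} (hB : M.IsBase B) :
    B.ncard = mrk' M M.E := by
  refine le_antisymm (indep_ncard_le_mrk hB.indep) ?_
  refine csSup_le ⟨0, ∅, M.empty_indep, by simp⟩ ?_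
  rintro n ⟨I, hI, -, rfl⟩
  obtain ⟨B', hB', hIB'⟩ := hI.exists_isBase_superset
  calc I.ncard ≤ B'.ncard := Set.ncard_le_ncard hIB' (M.set_finite B' hB'.subset_ground)
    _ = B.ncard := hB'.ncard_eq_ncard_of_isBase hB

lemma base_of_indep_ncard {M : Matroid α} [M.Finite] {I : Set α} (hI : M.Indep I)
    (hc : I.ncard = mrk' M M.E) : M.IsBase I := by
  obtain ⟨B, hB, hIB⟩ := hI.exists_isBase_superset
  have hBI : I = B :=
    Set.eq_of_subset_of_ncard_le hIB (by rw [hc, base_ncard hB]) (M.set_finite B hB.subset_ground)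
  rwa [hBI]

lemma mrk'_congr {M N : Matroid α} (h : ∀ I, M.Indep I ↔ N.Indep I) :
    mrk' M M.E = mrk' N N.E := by
  unfold mrk'
  congr 1
  ext n
  constructor
  · rintro ⟨I, hI, -, rfl⟩
    exact ⟨I, (h I).1 hI, ((h I).1 hI).subset_ground, rfl⟩
  · rintro ⟨I, hI, -, rfl⟩
    exact ⟨I, (h I).2 hI, ((h I).2 hI).subset_ground, rfl⟩

/-- Deletion of an element. -/
noncomputable def Mdel (M : Matroid α) (e : α) : Matroid α := M.restrict (M.E \ {e})

lemma Mdel_indep_iff {M : Matroid α} {e : α} {I : Set α} :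
    (Mdel M e).Indep I ↔ M.Indep I ∧ e ∉ I := by
  rw [Mdel, Matroid.restrict_indep_iff]
  constructor
  · rintro ⟨hI, hIE⟩; exact ⟨hI, fun he => (hIE he).2 rfl⟩
  · rintro ⟨hI, he⟩
    exact ⟨hI, fun x hx => ⟨hI.subset_ground hx, fun hxe => he (hxe ▸ hx)⟩⟩

lemma Mdel_ground {M : Matroid α} {e : α} : (Mdel M e).E = M.E \ {e} := rfl

instance Mdel_finite (M : Matroid α) [M.Finite] (e : α) : (Mdel M e).Finite := by
  unfold Mdel; exact Matroid.restrict_finite (M.ground_finite.diff)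

/-- Contraction of a non-loop element. -/
noncomputable def Mcon (M : Matroid α) [M.Finite] (e : α) (he : M.Indep {e}) : Matroid α :=
  (IndepMatroid.ofFinite (E := M.E \ {e}) (M.ground_finite.diff)
    (Indep := fun I => e ∉ I ∧ M.Indep (insert e I))
    (indep_empty := ⟨by simp, by simpa using he⟩)
    (indep_subset := by
      rintro I J ⟨heJ, hJ⟩ hIJ
      exact ⟨fun h => heJ (hIJ h), hJ.subset (insert_subset_insert hIJ)⟩)
    (indep_aug := by
      rintro I J ⟨heI, hI⟩ ⟨heJ, hJ⟩ hlt
      have hIfin : I.Finite := (M.set_finite _ (hI.subset_ground)).subset (subset_insert _ _)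
      have hJfin : J.Finite := (M.set_finite _ (hJ.subset_ground)).subset (subset_insert _ _)
      have hcard : (insert e I).encard < (insert e J).encard := by
        rw [Set.encard_insert_of_notMem heI, Set.encard_insert_of_notMem heJ,
          ← hIfin.cast_ncard_eq, ← hJfin.cast_ncard_eq]
        have h1 : I.ncard + 1 ≤ J.ncard := hlt
        exact_mod_cast by omega
      obtain ⟨x, hx, hxi⟩ := hI.augment hJ hcard
      rw [Set.mem_diff, Set.mem_insert_iff] at hx
      have hxe : x ≠ e := fun h => hx.2 (by simp [h])
      have hxJ : x ∈ J := hx.1.resolve_left hxe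
      have hxI : x ∉ I := fun h => hx.2 (Set.mem_insert_of_mem _ h)
      refine ⟨x, hxJ, hxI, ⟨by simp [heI, Ne.symm hxe], ?_⟩⟩
      rwa [Set.insert_comm] at hxi)
    (subset_ground := by
      rintro I ⟨heI, hI⟩ x hx
      exact ⟨hI.subset_ground (Set.mem_insert_of_mem _ hx), fun hxe => heI (hxe ▸ hx)⟩)).matroid

lemma Mcon_indep_iff {M : Matroid α} [M.Finite] {e : α} {he : M.Indep {e}} {I : Set α} :
    (Mcon M e he).Indep I ↔ e ∉ I ∧ M.Indep (insert e I) := by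
  simp [Mcon]

lemma Mcon_ground {M : Matroid α} [M.Finite] {e : α} {he : M.Indep {e}} :
    (Mcon M e he).E = M.E \ {e} := rfl

instance Mcon_finite (M : Matroid α) [M.Finite] (e : α) (he : M.Indep {e}) :
    (Mcon M e he).Finite := by unfold Mcon; infer_instance



/-- `e` lies in every base. -/
def Colp (M : Matroid α) (e : α) : Prop := ∀ ⦃B⦄, M.IsBase B → e ∈ B

lemma colp_insert_indep {M : Matroid α} {e : α} {I : Set α} (hc : Colp M e)
    (hI : M.Indep I) (heI : e ∉ I) : M.Indep (insert e I) := by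
  obtain ⟨B, hB, hIB⟩ := hI.exists_isBase_superset
  exact hB.indep.subset (insert_subset (hc hB) hIB)

lemma colp_indep {M : Matroid α} {e : α} (hc : Colp M e) : M.Indep {e} := by
  obtain ⟨B, hB⟩ := M.exists_isBase
  exact hB.indep.subset (by simpa using hc hB)

lemma mrk'_del_of_not_colp {M : Matroid α} [M.Finite] {e : α} (hc : ¬ Colp M e) :
    mrk' (Mdel M e) (Mdel M e).E = mrk' M M.E := by
  simp only [Colp, not_forall] at hc
  obtain ⟨B, hB, heB⟩ := hc
  have hBd : (Mdel M e).IsBase B := by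
    refine Matroid.Indep.isBase_of_maximal (Mdel_indep_iff.2 ⟨hB.indep, heB⟩) ?_
    intro J hJ hBJ
    exact hB.eq_of_subset_indep (Mdel_indep_iff.1 hJ).1 hBJ
  rw [← base_ncard hBd, base_ncard hB]

lemma base_del_of_colp {M : Matroid α} {e : α} {B : Set α} (hc : Colp M e) (hB : M.IsBase B) :
    (Mdel M e).IsBase (B \ {e}) := by
  refine Matroid.Indep.isBase_of_maximal
    (Mdel_indep_iff.2 ⟨hB.indep.subset Set.diff_subset, by simp⟩) ?_
  intro J hJ hBJ
  rw [Mdel_indep_iff] at hJ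
  have hIns : M.Indep (insert e J) := colp_insert_indep hc hJ.1 hJ.2
  have hBe : B = insert e J := by
    refine hB.eq_of_subset_indep hIns ?_
    intro x hx
    rcases eq_or_ne x e with rfl | hne
    · exact Set.mem_insert _ _
    · exact Set.mem_insert_of_mem _ (hBJ ⟨hx, hne⟩)
  rw [hBe]
  simp [hJ.2]

lemma mrk'_del_of_colp {M : Matroid α} [M.Finite] {e : α} (hc : Colp M e) :
    mrk' (Mdel M e) (Mdel M e).E + 1 = mrk' M M.E := by
  obtain ⟨B, hB⟩ := M.exists_isBase
  have heB : e ∈ B := hc hB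
  rw [← base_ncard (base_del_of_colp hc hB), ← base_ncard hB]
  exact Set.ncard_diff_singleton_add_one heB (M.set_finite B hB.subset_ground)

lemma base_con {M : Matroid α} [M.Finite] {e : α} (he : M.Indep {e}) {B : Set α}
    (hB : M.IsBase B) (heB : e ∈ B) : (Mcon M e he).IsBase (B \ {e}) := by
  have h1 : insert e (B \ {e}) = B := by
    rw [Set.insert_diff_singleton, Set.insert_eq_self.2 heB]
  refine Matroid.Indep.isBase_of_maximal (Mcon_indep_iff.2 ⟨by simp, by rw [h1]; exact hB.indep⟩) ?_
  intro J hJ hBJ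
  rw [Mcon_indep_iff] at hJ
  have hBe : B = insert e J := by
    refine hB.eq_of_subset_indep hJ.2 ?_
    rw [← h1]
    exact insert_subset_insert hBJ
  rw [hBe]
  simp [hJ.1]

lemma mrk'_con {M : Matroid α} [M.Finite] {e : α} (he : M.Indep {e}) :
    mrk' (Mcon M e he) (Mcon M e he).E + 1 = mrk' M M.E := by
  obtain ⟨B, hB, heB⟩ := he.exists_isBase_superset
  have heB' : e ∈ B := heB rfl
  rw [← base_ncard (base_con he hB heB'), ← base_ncard hB]
  exact Set.ncard_diff_singleton_add_one heB' (M.set_finite B hB.subset_ground)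

lemma bases_mono {A B : Matroid α} [A.Finite] [B.Finite]
    (hweak : ∀ I : Set α, B.Indep I → A.Indep I)
    (hrk : mrk' A A.E = mrk' B B.E) {β : Set α} (hβ : B.IsBase β) : A.IsBase β :=
  base_of_indep_ncard (hweak _ hβ.indep) (by rw [base_ncard hβ, hrk])

open Polynomial in
/-- The shelling polynomial `∑_{I indep} (X-1)^(r - |I|)`. -/
noncomputable def HP (M : Matroid α) [M.Finite] : Polynomial ℤ :=
  ∑ I ∈ (indepSet_finite M).toFinset, (X - 1) ^ (mrk' M M.E - I.ncard)

open Polynomial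

lemma HP_congr {M N : Matroid α} [M.Finite] [N.Finite] (h : ∀ I, M.Indep I ↔ N.Indep I) :
    HP M = HP N := by
  unfold HP
  rw [mrk'_congr h]
  apply Finset.sum_congr _ (fun _ _ => rfl)
  ext I
  simp only [Set.Finite.mem_toFinset, Set.mem_setOf_eq]
  exact h I

lemma HP_loop {M : Matroid α} [M.Finite] {e : α} (hl : ¬ M.Indep {e}) :
    HP M = HP (Mdel M e) := by
  refine HP_congr fun I => ⟨fun hI => Mdel_indep_iff.2 ⟨hI, fun heI => hl (hI.subset (by simpa))⟩,
    fun hI => (Mdel_indep_iff.1 hI).1⟩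

lemma HP_eq_del_add {M : Matroid α} [M.Finite] {e : α} (he : M.Indep {e}) :
    HP M = (∑ J ∈ (indepSet_finite (Mdel M e)).toFinset,
        (X - 1 : Polynomial ℤ) ^ (mrk' M M.E - J.ncard))
      + ∑ J ∈ (indepSet_finite (Mcon M e he)).toFinset,
        (X - 1) ^ (mrk' M M.E - (J.ncard + 1)) := by
  classical
  unfold HP
  rw [← Finset.sum_filter_add_sum_filter_not (indepSet_finite M).toFinset (fun I => e ∉ I)]
  congr 1
  · apply Finset.sum_congr _ (fun _ _ => rfl)
    ext I
    simp only [Finset.mem_filter, Set.Finite.mem_toFinset, Set.mem_setOf_eq, Mdel_indep_iff]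
  · refine Finset.sum_nbij' (fun I => I \ {e}) (fun J => insert e J) ?_ ?_ ?_ ?_ ?_
    · intro I hI
      simp only [Finset.mem_filter, Set.Finite.mem_toFinset, Set.mem_setOf_eq, not_not] at hI
      simp only [Set.Finite.mem_toFinset, Set.mem_setOf_eq, Mcon_indep_iff]
      have h1 : insert e (I \ {e}) = I := by
        rw [Set.insert_diff_singleton, Set.insert_eq_self.2 hI.2]
      exact ⟨by simp, by rw [h1]; exact hI.1⟩
    · intro J hJ
      simp only [Set.Finite.mem_toFinset, Set.mem_setOf_eq, Mcon_indep_iff] at hJ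
      simp only [Finset.mem_filter, Set.Finite.mem_toFinset, Set.mem_setOf_eq, not_not]
      exact ⟨hJ.2, Set.mem_insert _ _⟩
    · intro I hI
      simp only [Finset.mem_filter, Set.Finite.mem_toFinset, Set.mem_setOf_eq, not_not] at hI
      show insert e (I \ {e}) = I
      rw [Set.insert_diff_singleton, Set.insert_eq_self.2 hI.2]
    · intro J hJ
      simp only [Set.Finite.mem_toFinset, Set.mem_setOf_eq, Mcon_indep_iff] at hJ
      show insert e J \ {e} = J
      rw [Set.insert_diff_self_of_notMem hJ.1]
    · intro I hI
      simp only [Finset.mem_filter, Set.Finite.mem_toFinset, Set.mem_setOf_eq, not_not] at hI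
      have hfin : I.Finite := M.set_finite I hI.1.subset_ground
      rw [← Set.ncard_diff_singleton_add_one hI.2 hfin]

lemma HP_del_con {M : Matroid α} [M.Finite] {e : α} (he : M.Indep {e}) (hc : ¬ Colp M e) :
    HP M = HP (Mdel M e) + HP (Mcon M e he) := by
  rw [HP_eq_del_add he]
  congr 1
  · unfold HP
    rw [mrk'_del_of_not_colp hc]
  · unfold HP
    apply Finset.sum_congr rfl
    intro J hJ
    simp only [Set.Finite.mem_toFinset, Set.mem_setOf_eq] at hJ
    have h1 := mrk'_con (M := M) he
    have h2 := indep_ncard_le_mrk hJ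
    congr 1
    omega

lemma HP_coloop {M : Matroid α} [M.Finite] {e : α} (he : M.Indep {e}) (hc : Colp M e) :
    HP M = X * HP (Mdel M e) := by
  rw [HP_eq_del_add he]
  have hcd : ∀ J, (Mcon M e he).Indep J ↔ (Mdel M e).Indep J := by
    intro J
    rw [Mcon_indep_iff, Mdel_indep_iff]
    exact ⟨fun h => ⟨h.2.subset (subset_insert _ _), h.1⟩,
      fun h => ⟨h.2, colp_insert_indep hc h.1 h.2⟩⟩
  have hfs : (indepSet_finite (Mcon M e he)).toFinset = (indepSet_finite (Mdel M e)).toFinset := by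
    ext J
    simp only [Set.Finite.mem_toFinset, Set.mem_setOf_eq]
    exact hcd J
  rw [hfs]
  unfold HP
  rw [Finset.mul_sum, ← Finset.sum_add_distrib]
  apply Finset.sum_congr rfl
  intro J hJ
  simp only [Set.Finite.mem_toFinset, Set.mem_setOf_eq] at hJ
  have h1 := mrk'_del_of_colp (M := M) hc
  have h2 := indep_ncard_le_mrk hJ
  have e1 : mrk' M M.E - J.ncard = (mrk' (Mdel M e) (Mdel M e).E - J.ncard) + 1 := by omega
  have e2 : mrk' M M.E - (J.ncard + 1) = mrk' (Mdel M e) (Mdel M e).E - J.ncard := by omega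
  rw [e1, e2, pow_succ]
  ring

lemma loop_indep_iff {M : Matroid α} {e : α} (hl : ¬ M.Indep {e}) :
    ∀ I, M.Indep I ↔ (Mdel M e).Indep I := fun I =>
  ⟨fun hI => Mdel_indep_iff.2 ⟨hI, fun heI => hl (hI.subset (by simpa))⟩,
    fun hI => (Mdel_indep_iff.1 hI).1⟩

lemma HP_ground_empty {M : Matroid α} [M.Finite] (h : M.E = ∅) : HP M = 1 := by
  have hind : ∀ I, M.Indep I ↔ I = ∅ := by
    intro I
    refine ⟨fun hI => ?_, fun hI => hI ▸ M.empty_indep⟩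
    have := hI.subset_ground
    rw [h] at this
    exact Set.subset_empty_iff.1 this
  have hfs : (indepSet_finite M).toFinset = {(∅ : Set α)} := by
    ext I
    simp only [Set.Finite.mem_toFinset, Set.mem_setOf_eq, Finset.mem_singleton]
    exact hind I
  have hr : mrk' M M.E = 0 := by
    have : {n | ∃ I, M.Indep I ∧ I ⊆ M.E ∧ I.ncard = n} = {0} := by
      ext n
      simp only [Set.mem_setOf_eq, Set.mem_singleton_iff]
      constructor
      · rintro ⟨I, hI, -, rfl⟩
        rw [(hind I).1 hI]
        simp
      · rintro rfl
        exact ⟨∅, M.empty_indep, by simp⟩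
    rw [mrk', this, csSup_singleton]
  unfold HP
  rw [hfs, hr]
  simp

lemma HP_coeff_nonneg : ∀ (n : ℕ) (M : Matroid α) [M.Finite], M.E.ncard = n →
    ∀ m, 0 ≤ (HP M).coeff m := by
  intro n
  induction n using Nat.strong_induction_on with
  | _ n IH =>
  intro M hMf hn m
  rcases Set.eq_empty_or_nonempty M.E with hE | ⟨e, he⟩
  · rw [HP_ground_empty hE, Polynomial.coeff_one]
    split_ifs <;> norm_num
  · have hlt : (M.E \ {e}).ncard < n :=
      hn ▸ Set.ncard_diff_singleton_lt_of_mem he M.ground_finite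
    by_cases hl : M.Indep {e}
    · by_cases hc : Colp M e
      · rw [HP_coloop hl hc]
        match m with
        | 0 => rw [Polynomial.mul_coeff_zero]; simp
        | m + 1 =>
          rw [Polynomial.coeff_X_mul]
          exact IH _ hlt (Mdel M e) rfl m
      · rw [HP_del_con hl hc, Polynomial.coeff_add]
        have h1 := IH _ hlt (Mdel M e) rfl m
        have h2 := IH _ hlt (Mcon M e hl) rfl m
        omega
    · rw [HP_loop hl]
      exact IH _ hlt (Mdel M e) rfl m

lemma HP_coeff_mono : ∀ (n : ℕ) (A B : Matroid α) [A.Finite] [B.Finite],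
    A.E.ncard = n → A.E = B.E → (∀ I, B.Indep I → A.Indep I) →
    mrk' A A.E = mrk' B B.E → ∀ m, (HP B).coeff m ≤ (HP A).coeff m := by
  intro n
  induction n using Nat.strong_induction_on with
  | _ n IH =>
  intro A B hAf hBf hn hE hweak hrk m
  rcases Set.eq_empty_or_nonempty A.E with hAE | ⟨e, heA⟩
  · rw [HP_ground_empty hAE, HP_ground_empty (hE ▸ hAE)]
  -- find a good element
  have hgood : ∃ e ∈ A.E, ¬ A.Indep {e} ∨ Colp A e ∨ ¬ Colp B e := by
    by_contra hcon
    push_neg at hcon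
    obtain ⟨B₀, hB₀⟩ := B.exists_isBase
    have hBE : B₀ = B.E := by
      refine subset_antisymm hB₀.subset_ground fun x hx => ?_
      exact (hcon x (hE ▸ hx)).2.2 hB₀
    have hAEindep : A.Indep A.E := hweak _ (hE ▸ (hBE ▸ hB₀.indep))
    refine (hcon e heA).2.1 fun β hβ => ?_
    have : β = A.E := hβ.eq_of_subset_indep hAEindep hβ.subset_ground
    rw [this]
    exact heA
  clear heA
  obtain ⟨e, heA, hcase⟩ := hgood
  have hlt : (A.E \ {e}).ncard < n :=
    hn ▸ Set.ncard_diff_singleton_lt_of_mem heA A.ground_finite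
  have hEd : (Mdel A e).E = (Mdel B e).E := by rw [Mdel_ground, Mdel_ground, hE]
  by_cases hl : A.Indep {e}
  · by_cases hcA : Colp A e
    · -- coloop case
      have hcB : Colp B e := fun β hβ => hcA (bases_mono hweak hrk hβ)
      have hlB : B.Indep {e} := colp_indep hcB
      rw [HP_coloop hl hcA, HP_coloop hlB hcB]
      have hrk' : mrk' (Mdel A e) (Mdel A e).E = mrk' (Mdel B e) (Mdel B e).E := by
        have h1 := mrk'_del_of_colp (M := A) hcA
        have h2 := mrk'_del_of_colp (M := B) hcB
        omega
      have hweak' : ∀ I, (Mdel B e).Indep I → (Mdel A e).Indep I := fun I hI =>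
        Mdel_indep_iff.2 ⟨hweak _ (Mdel_indep_iff.1 hI).1, (Mdel_indep_iff.1 hI).2⟩
      match m with
      | 0 => rw [Polynomial.mul_coeff_zero, Polynomial.mul_coeff_zero]; simp
      | m + 1 =>
        rw [Polynomial.coeff_X_mul, Polynomial.coeff_X_mul]
        exact IH _ hlt (Mdel A e) (Mdel B e) rfl hEd hweak' hrk' m
    · have hcB : ¬ Colp B e := by
        rcases hcase with h | h | h
        · exact absurd hl h
        · exact absurd h hcA
        · exact h
      have hrkdel : mrk' (Mdel A e) (Mdel A e).E = mrk' (Mdel B e) (Mdel B e).E := by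
        rw [mrk'_del_of_not_colp hcA, mrk'_del_of_not_colp hcB, hrk]
      have hweak' : ∀ I, (Mdel B e).Indep I → (Mdel A e).Indep I := fun I hI =>
        Mdel_indep_iff.2 ⟨hweak _ (Mdel_indep_iff.1 hI).1, (Mdel_indep_iff.1 hI).2⟩
      have hdel := IH _ hlt (Mdel A e) (Mdel B e) rfl hEd hweak' hrkdel m
      by_cases hlB : B.Indep {e}
      · rw [HP_del_con hl hcA, HP_del_con hlB hcB, Polynomial.coeff_add, Polynomial.coeff_add]
        have hEc : (Mcon A e hl).E = (Mcon B e hlB).E := by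
          rw [Mcon_ground, Mcon_ground, hE]
        have hweakc : ∀ I, (Mcon B e hlB).Indep I → (Mcon A e hl).Indep I := fun I hI => by
          rw [Mcon_indep_iff] at hI ⊢
          exact ⟨hI.1, hweak _ hI.2⟩
        have hrkc : mrk' (Mcon A e hl) (Mcon A e hl).E
            = mrk' (Mcon B e hlB) (Mcon B e hlB).E := by
          have h1 := mrk'_con (M := A) hl
          have h2 := mrk'_con (M := B) hlB
          omega
        have hcon := IH _ hlt (Mcon A e hl) (Mcon B e hlB) rfl hEc hweakc hrkc m
        omega
      · rw [HP_del_con hl hcA, HP_loop hlB, Polynomial.coeff_add]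
        have hBdel : mrk' (Mdel B e) (Mdel B e).E = mrk' B B.E :=
          (mrk'_congr (loop_indep_iff hlB)).symm
        have hnn := HP_coeff_nonneg _ (Mcon A e hl) rfl m
        omega
  · -- e is a loop of A, hence of B
    have hlB : ¬ B.Indep {e} := fun h => hl (hweak _ h)
    rw [HP_loop hl, HP_loop hlB]
    have hrk' : mrk' (Mdel A e) (Mdel A e).E = mrk' (Mdel B e) (Mdel B e).E := by
      rw [← mrk'_congr (loop_indep_iff hl), ← mrk'_congr (loop_indep_iff hlB), hrk]
    have hweak' : ∀ I, (Mdel B e).Indep I → (Mdel A e).Indep I := fun I hI =>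
      Mdel_indep_iff.2 ⟨hweak _ (Mdel_indep_iff.1 hI).1, (Mdel_indep_iff.1 hI).2⟩
    exact IH _ hlt (Mdel A e) (Mdel B e) rfl hEd hweak' hrk' m

lemma mrk_eq {M : Matroid α} {X : Set α} : mrk M X = mrk' M X := rfl

lemma fInd_eq {M : Matroid α} [M.Finite] (i : ℕ) :
    (fInd M i : ℤ) = (((indepSet_finite M).toFinset.filter (fun I => I.ncard = i)).card : ℤ) := by
  classical
  congr 1
  rw [fInd, ← Set.ncard_coe_finset]
  congr 1
  ext I
  simp only [Finset.coe_filter, Set.Finite.mem_toFinset, Set.mem_setOf_eq]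

lemma HP_coeff_eq {M : Matroid α} [M.Finite] (m : ℕ) :
    (HP M).coeff m = ∑ I ∈ (indepSet_finite M).toFinset,
      (-1 : ℤ) ^ ((mrk' M M.E - I.ncard) - m) * ((mrk' M M.E - I.ncard).choose m) := by
  unfold HP
  rw [Polynomial.finset_sum_coeff]
  apply Finset.sum_congr rfl
  intro I _
  have : (X - 1 : Polynomial ℤ) = X + Polynomial.C (-1) := by
    simp [sub_eq_add_neg]
  rw [this, Polynomial.coeff_X_add_C_pow]

lemma hInd_eq_coeff {M : Matroid α} [M.Finite] {k : ℕ} (hk : k ≤ mrk' M M.E) :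
    hInd M k = (HP M).coeff (mrk' M M.E - k) := by
  classical
  set r := mrk' M M.E with hr
  rw [HP_coeff_eq]
  have hmaps : ∀ I ∈ (indepSet_finite M).toFinset, I.ncard ∈ Finset.range (r + 1) := by
    intro I hI
    rw [Set.Finite.mem_toFinset] at hI
    rw [Finset.mem_range]
    exact Nat.lt_succ_of_le (indep_ncard_le_mrk hI)
  rw [← Finset.sum_fiberwise_of_maps_to' hmaps
    (fun i => (-1 : ℤ) ^ ((r - i) - (r - k)) * ((r - i).choose (r - k)))]
  have hconst : ∀ i ∈ Finset.range (r + 1),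
      (∑ I ∈ (indepSet_finite M).toFinset with I.ncard = i,
        (-1 : ℤ) ^ ((r - i) - (r - k)) * ((r - i).choose (r - k)))
      = (fInd M i : ℤ) * ((-1 : ℤ) ^ ((r - i) - (r - k)) * ((r - i).choose (r - k))) := by
    intro i _
    rw [Finset.sum_const, fInd_eq, nsmul_eq_mul]
  rw [Finset.sum_congr rfl hconst]
  rw [hInd]
  rw [← Finset.sum_subset (Finset.range_subset_range.2 (by omega : k + 1 ≤ r + 1))]
  · apply Finset.sum_congr rfl
    intro i hi
    rw [Finset.mem_range] at hi
    have hik : i ≤ k := by omega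
    have h1 : (r - i) - (r - k) = k - i := by omega
    have h2 : (r - i).choose (r - k) = (r - i).choose (k - i) := by
      have h3 : (r - i) - (k - i) = r - k := by omega
      rw [← h3, Nat.choose_symm (by omega)]
    rw [h1, h2, mrk_eq]
    ring
  · intro i hi hni
    rw [Finset.mem_range] at hi
    rw [Finset.mem_range, not_lt] at hni
    have : (r - i).choose (r - k) = 0 := Nat.choose_eq_zero_of_lt (by omega)
    rw [this]
    simp

lemma hInd_eq_zero {M : Matroid α} [M.Finite] {k : ℕ} (hk : mrk' M M.E < k) :
    hInd M k = 0 := by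
  rw [hInd]
  apply Finset.sum_eq_zero
  intro i hi
  rw [Finset.mem_range] at hi
  rcases eq_or_lt_of_le (by omega : i ≤ k) with rfl | hik
  · have : {I : Set α | M.Indep I ∧ I.ncard = i} = ∅ := by
      ext I
      simp only [Set.mem_setOf_eq, Set.mem_empty_iff_false, iff_false, not_and]
      intro hI hc
      exact absurd (indep_ncard_le_mrk hI) (by omega)
    rw [fInd, this]
    simp
  · have : (mrk M M.E - i).choose (k - i) = 0 := by
      apply Nat.choose_eq_zero_of_lt
      rw [mrk_eq]
      omega
    rw [this]
    simp

end Stmt9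

/-- If `A → B` is a rank-preserving weak map of matroids, then for
every `k`, the `h`-number `h_k` of the independence complex of `A` is at least
`h_k` of the independence complex of `B`. -/
theorem stmt9 {α : Type*} (A B : Matroid α) [A.Finite] [B.Finite]
    (hE : A.E = B.E) (hweak : ∀ I : Set α, B.Indep I → A.Indep I)
    (hrk : mrk A A.E = mrk B B.E) :
    ∀ k : ℕ, hInd B k ≤ hInd A k := by
  intro k
  have hrk' : Stmt9.mrk' A A.E = Stmt9.mrk' B B.E := hrk
  rcases le_or_gt k (Stmt9.mrk' A A.E) with hk | hk
  · rw [Stmt9.hInd_eq_coeff hk, Stmt9.hInd_eq_coeff (hrk' ▸ hk)]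
    rw [hrk']
    exact Stmt9.HP_coeff_mono A.E.ncard A B rfl hE hweak hrk' (Stmt9.mrk' B B.E - k)
  · rw [Stmt9.hInd_eq_zero hk, Stmt9.hInd_eq_zero (hrk' ▸ hk)]
end

section
/- Every weak map of matroids A → B can be decomposed as a strong map followed by a rank-preserving weak map: there exists a matroid C with a strong map A → C and a rank-preserving weak map C → B (or in the other order as appropriate). -/
open Set

/-- Every weak map of matroids `A → B` decomposes as a strong
map `A → C` followed by a rank-preserving weak map `C → B`. -/
theorem stmt12 {α : Type*} (A B : Matroid α) [A.Finite] [B.Finite]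
    (hE : A.E = B.E) (hweak : ∀ I : Set α, B.Indep I → A.Indep I) :
    ∃ C : Matroid α, C.E = A.E ∧
      (∀ F : Set α, C.IsFlat F → A.IsFlat F) ∧
      (∀ I : Set α, B.Indep I → C.Indep I) ∧
      mrk C C.E = mrk B B.E := by
  classical
  set k := mrk B B.E with hk
  have hAE : A.E.Finite := A.ground_finite
  have hAfin : ∀ I, A.Indep I → I.Finite := fun I hI => hAE.subset hI.subset_ground
  have hbddB : BddAbove {n | ∃ I, B.Indep I ∧ I ⊆ B.E ∧ I.ncard = n} :=
    ⟨B.E.ncard, fun n ⟨I, _, hIE, hn⟩ => hn ▸ ncard_le_ncard hIE B.ground_finite⟩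
  have hneB : {n | ∃ I, B.Indep I ∧ I ⊆ B.E ∧ I.ncard = n}.Nonempty :=
    ⟨0, ∅, B.empty_indep, empty_subset _, by simp⟩
  obtain ⟨I₀, hI₀, -, hI₀card⟩ := Nat.sSup_mem hneB hbddB
  -- the truncation of A to rank k
  set C : Matroid α := (IndepMatroid.ofFinite hAE (fun I => A.Indep I ∧ I.ncard ≤ k)
    ⟨A.empty_indep, by simp⟩
    (fun I J hJ hIJ => ⟨hJ.1.subset hIJ, le_trans (ncard_le_ncard hIJ (hAfin _ hJ.1)) hJ.2⟩)
    (by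
      rintro I J hI hJ hlt
      obtain ⟨e, he, hei⟩ := hI.1.augment hJ.1 (by
        rw [← (hAfin _ hI.1).cast_ncard_eq, ← (hAfin _ hJ.1).cast_ncard_eq]
        exact_mod_cast hlt)
      refine ⟨e, he.1, he.2, hei, ?_⟩
      rw [ncard_insert_of_notMem he.2 (hAfin _ hI.1)]
      have : I.ncard < J.ncard := hlt
      have : J.ncard ≤ k := hJ.2
      omega)
    (fun I hI => hI.1.subset_ground)).matroid with hC
  have hCE : C.E = A.E := rfl
  have hCI : ∀ I, C.Indep I ↔ A.Indep I ∧ I.ncard ≤ k := by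
    intro I; rw [hC]; simp
  refine ⟨C, rfl, ?_, ?_, ?_⟩
  · -- flats of C are flats of A
    intro F hF
    have hFE : F ⊆ A.E := hF.subset_ground
    obtain ⟨I, hIb⟩ := C.exists_isBasis F hF.subset_ground
    have hICind := (hCI I).mp hIb.indep
    rcases lt_or_eq_of_le hICind.2 with hlt | heq
    · -- rank of F is below k; F is a flat of A
      have hIA : A.IsBasis I F := by
        refine hICind.1.isBasis_of_maximal_subset hIb.subset ?_ hFE
        intro J hJ hIJ hJF
        by_contra hns
        obtain ⟨e, heJ, heI⟩ := not_subset.mp hns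
        have hins : C.Indep (insert e I) := (hCI _).mpr
          ⟨hJ.subset (insert_subset heJ hIJ), by
            rw [ncard_insert_of_notMem heI (hAfin _ hICind.1)]; omega⟩
        have := hIb.eq_of_subset_indep hins (subset_insert e I)
          (insert_subset (hJF heJ) hIb.subset)
        exact heI (this ▸ mem_insert e I)
      constructor
      swap
      · exact hFE
      intro J X hJF hJX
      have hJcard : J.ncard = I.ncard := by
        have := hJF.encard_eq_encard hIA
        rw [Set.ncard_def, Set.ncard_def, this]
      have hJC : C.Indep J := (hCI _).mpr ⟨hJF.indep, by omega⟩
      have hJFC : C.IsBasis J F := by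
        refine hJC.isBasis_of_maximal_subset hJF.subset ?_ hFE
        intro J' hJ' hJJ' hJ'F
        exact (hJF.eq_of_subset_indep ((hCI _).mp hJ').1 hJJ' hJ'F).symm.subset
      have hJXC : C.IsBasis J X := by
        refine hJC.isBasis_of_maximal_subset hJX.subset ?_ hJX.subset_ground
        intro J' hJ' hJJ' hJ'X
        exact (hJX.eq_of_subset_indep ((hCI _).mp hJ').1 hJJ' hJ'X).symm.subset
      exact hF.subset_of_isBasis_of_isBasis hJFC hJXC
    · -- rank of F equals k; F must be the ground set
      have hIE : C.IsBasis I C.E := by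
        refine hIb.indep.isBasis_of_maximal_subset (hIb.subset.trans hFE) ?_ Subset.rfl
        intro J hJ hIJ _
        have hJle : J.ncard ≤ I.ncard := heq ▸ ((hCI J).mp hJ).2
        exact (eq_of_subset_of_ncard_le hIJ hJle
          (hAfin _ ((hCI J).mp hJ).1)).symm.subset
      have hFeq : F = A.E :=
        (hF.subset_of_isBasis_of_isBasis hIb hIE).antisymm' hFE
      exact hFeq ▸ A.ground_isFlat
  · -- B-independent sets are C-independent
    intro I hI
    refine (hCI I).mpr ⟨hweak I hI, ?_⟩
    exact le_csSup hbddB ⟨I, hI, hI.subset_ground, rfl⟩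
  · -- ranks agree
    have hbddC : BddAbove {n | ∃ I, C.Indep I ∧ I ⊆ C.E ∧ I.ncard = n} :=
      ⟨k, fun n ⟨I, hI, _, hn⟩ => hn ▸ ((hCI I).mp hI).2⟩
    apply le_antisymm
    · exact csSup_le ⟨0, ∅, C.empty_indep, empty_subset _, by simp⟩
        (fun n ⟨I, hI, _, hn⟩ => hn ▸ ((hCI I).mp hI).2)
    · refine le_csSup hbddC ⟨I₀, (hCI I₀).mpr ⟨hweak I₀ hI₀, hI₀card.le⟩, ?_, hI₀card⟩
      rw [hCE, hE]
      exact hI₀.subset_ground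
end

section
/- Let M be a matroid of rank r+1 on ground set [n]. For each full chain of flats 0_M ⊊ F_1 ⊊ ... ⊊ F_r ⊊ E, define b_i = min(F_i \ F_{i−1}) (with F_0 = 0_M, F_{r+1} = E). Then the map sending a full chain to the string (b_1, ..., b_{r+1}) is injective, and {b_1, ..., b_{r+1}} is a basis of M. -/
/-- A full chain of flats of a matroid of rank `r+1`:
`0_M = F_0 ⊊ F_1 ⊊ ... ⊊ F_r ⊊ F_{r+1} = E`, one flat of each rank. -/
def IsFullChain {α : Type*} (M : Matroid α) (r : ℕ) (F : Fin (r + 2) → Set α) : Prop :=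
  F 0 = M.closure ∅ ∧ F (Fin.last (r + 1)) = M.E ∧ StrictMono F ∧ ∀ i, M.IsFlat (F i)

section Aux

variable {α : Type*} [LinearOrder α] {M : Matroid α} {r : ℕ}

lemma indep_ncard_le_of_mrk [M.Finite] (hrk : mrk M M.E = r + 1) {I : Set α}
    (hI : M.Indep I) : I.ncard ≤ r + 1 := by
  have hbdd : BddAbove {n | ∃ I, M.Indep I ∧ I ⊆ M.E ∧ I.ncard = n} := by
    refine ⟨M.E.ncard, ?_⟩
    rintro n ⟨J, hJ, hJE, rfl⟩
    exact Set.ncard_le_ncard hJE M.ground_finite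
  have hmem : I.ncard ∈ {n | ∃ I, M.Indep I ∧ I ⊆ M.E ∧ I.ncard = n} :=
    ⟨I, hI, hI.subset_ground, rfl⟩
  have h := le_csSup hbdd hmem
  rwa [show sSup {n | ∃ I, M.Indep I ∧ I ⊆ M.E ∧ I.ncard = n} = mrk M M.E from rfl,
    hrk] at h

lemma chain_image_subset (F : Fin (r + 2) → Set α) (hF : IsFullChain M r F)
    (b : Fin (r + 1) → α)
    (hb : ∀ i : Fin (r + 1), IsLeast (F i.succ \ F i.castSucc) (b i)) :
    ∀ n (hn : n < r + 2), (b '' {j : Fin (r + 1) | (j : ℕ) < n}) ⊆ F ⟨n, hn⟩ := by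
  rintro n hn x ⟨j, hj, rfl⟩
  have h1 : b j ∈ F j.succ := (hb j).1.1
  have h2 : F j.succ ⊆ F ⟨n, hn⟩ :=
    hF.2.2.1.monotone (by simp only [Fin.le_def, Fin.val_succ]; exact hj)
  exact h2 h1

lemma chain_indep (F : Fin (r + 2) → Set α) (hF : IsFullChain M r F)
    (b : Fin (r + 1) → α)
    (hb : ∀ i : Fin (r + 1), IsLeast (F i.succ \ F i.castSucc) (b i)) :
    ∀ n (hn : n ≤ r + 1), M.Indep (b '' {j : Fin (r + 1) | (j : ℕ) < n}) ∧
      (b '' {j : Fin (r + 1) | (j : ℕ) < n}).ncard = n := by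
  have hflat := hF.2.2.2
  intro n
  induction n with
  | zero =>
    intro _
    have h0 : {j : Fin (r + 1) | (j : ℕ) < 0} = ∅ := by ext j; simp
    rw [h0]
    simp [M.empty_indep]
  | succ n ih =>
    intro hn
    obtain ⟨hind, hcard⟩ := ih (by omega)
    set i : Fin (r + 1) := ⟨n, by omega⟩ with hi
    have hset : {j : Fin (r + 1) | (j : ℕ) < n + 1} = insert i {j : Fin (r + 1) | (j : ℕ) < n} := by
      ext j
      simp only [Set.mem_setOf_eq, Set.mem_insert_iff, Fin.ext_iff, hi]
      omega
    have hcs : (i.castSucc : Fin (r + 2)) = ⟨n, by omega⟩ := by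
      apply Fin.ext; simp [hi]
    have hs : (i.succ : Fin (r + 2)) = ⟨n + 1, by omega⟩ := by
      apply Fin.ext; simp [hi]
    have hbmem := (hb i).1
    rw [hcs, hs] at hbmem
    have hbE : b i ∈ M.E := (hflat ⟨n + 1, by omega⟩).subset_ground hbmem.1
    have hSsub := chain_image_subset F hF b hb n (by omega)
    have hbnotS : b i ∉ b '' {j : Fin (r + 1) | (j : ℕ) < n} :=
      fun h => hbmem.2 (hSsub h)
    have hclS : M.closure (b '' {j : Fin (r + 1) | (j : ℕ) < n}) ⊆ F ⟨n, by omega⟩ := by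
      rw [← (hflat ⟨n, by omega⟩).closure]
      exact M.closure_subset_closure hSsub
    have hins : M.Indep (insert (b i) (b '' {j : Fin (r + 1) | (j : ℕ) < n})) := by
      rw [hind.insert_indep_iff_of_notMem hbnotS]
      exact ⟨hbE, fun h => hbmem.2 (hclS h)⟩
    have hfin : (b '' {j : Fin (r + 1) | (j : ℕ) < n}).Finite :=
      Set.Finite.image b (Set.toFinite _)
    constructor
    · rw [hset, Set.image_insert_eq]
      exact hins
    · rw [hset, Set.image_insert_eq, Set.ncard_insert_of_notMem hbnotS hfin, hcard]

lemma chain_extend (F : Fin (r + 2) → Set α) (hF : IsFullChain M r F)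
    (b : Fin (r + 1) → α)
    (hb : ∀ i : Fin (r + 1), IsLeast (F i.succ \ F i.castSucc) (b i)) :
    ∀ m k (hkm : k + m = r + 1), ∀ I : Set α, M.Indep I → I.Finite →
      I ⊆ F ⟨k, by omega⟩ → ∃ J, M.Indep J ∧ J.ncard = I.ncard + m := by
  have hmono := hF.2.2.1
  have hflat := hF.2.2.2
  intro m
  induction m with
  | zero => exact fun k hk I hI _ _ => ⟨I, hI, by simp⟩
  | succ m ih =>
    intro k hk I hI hfin hsub
    set i : Fin (r + 1) := ⟨k, by omega⟩ with hi
    have hcs : (i.castSucc : Fin (r + 2)) = ⟨k, by omega⟩ := by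
      apply Fin.ext; simp [hi]
    have hs : (i.succ : Fin (r + 2)) = ⟨k + 1, by omega⟩ := by
      apply Fin.ext; simp [hi]
    have hbmem := (hb i).1
    rw [hcs, hs] at hbmem
    have hbE : b i ∈ M.E := (hflat ⟨k + 1, by omega⟩).subset_ground hbmem.1
    have hbnotI : b i ∉ I := fun h => hbmem.2 (hsub h)
    have hclI : M.closure I ⊆ F ⟨k, by omega⟩ := by
      rw [← (hflat ⟨k, by omega⟩).closure]
      exact M.closure_subset_closure hsub
    have hins : M.Indep (insert (b i) I) := by
      rw [hI.insert_indep_iff_of_notMem hbnotI]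
      exact ⟨hbE, fun h => hbmem.2 (hclI h)⟩
    have hsub' : insert (b i) I ⊆ F ⟨k + 1, by omega⟩ := by
      refine Set.insert_subset hbmem.1 (hsub.trans ?_)
      exact hmono.monotone (by simp [Fin.mk_le_mk])
    obtain ⟨J, hJ, hJcard⟩ := ih (k + 1) (by omega) _ hins (hfin.insert _) hsub'
    refine ⟨J, hJ, ?_⟩
    rw [hJcard, Set.ncard_insert_of_notMem hbnotI hfin]
    omega

lemma chain_closure [M.Finite] (hrk : mrk M M.E = r + 1)
    (F : Fin (r + 2) → Set α) (hF : IsFullChain M r F)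
    (b : Fin (r + 1) → α)
    (hb : ∀ i : Fin (r + 1), IsLeast (F i.succ \ F i.castSucc) (b i)) :
    ∀ n (hn : n < r + 2),
      F ⟨n, hn⟩ = M.closure (b '' {j : Fin (r + 1) | (j : ℕ) < n}) := by
  have hflat := hF.2.2.2
  intro n hn
  have hSsub := chain_image_subset F hF b hb n hn
  refine subset_antisymm ?_ ?_
  · intro x hx
    by_contra hxcl
    have hSE : (b '' {j : Fin (r + 1) | (j : ℕ) < n}) ⊆ M.E :=
      hSsub.trans (hflat ⟨n, hn⟩).subset_ground
    have hxS : x ∉ b '' {j : Fin (r + 1) | (j : ℕ) < n} :=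
      fun h => hxcl (M.subset_closure _ hSE h)
    obtain ⟨hind, hcard⟩ := chain_indep F hF b hb n (by omega)
    have hxE : x ∈ M.E := (hflat ⟨n, hn⟩).subset_ground hx
    have hins : M.Indep (insert x (b '' {j : Fin (r + 1) | (j : ℕ) < n})) := by
      rw [hind.insert_indep_iff_of_notMem hxS]
      exact ⟨hxE, hxcl⟩
    have hfin : (b '' {j : Fin (r + 1) | (j : ℕ) < n}).Finite :=
      Set.Finite.image b (Set.toFinite _)
    have hins_sub : insert x (b '' {j : Fin (r + 1) | (j : ℕ) < n}) ⊆ F ⟨n, hn⟩ :=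
      Set.insert_subset hx hSsub
    obtain ⟨J, hJ, hJcard⟩ := chain_extend F hF b hb (r + 1 - n) n (by omega) _
      hins (hfin.insert _) hins_sub
    have hle := indep_ncard_le_of_mrk hrk hJ
    rw [hJcard, Set.ncard_insert_of_notMem hxS hfin, hcard] at hle
    omega
  · rw [← (hflat ⟨n, hn⟩).closure]
    exact M.closure_subset_closure hSsub

end Aux

/-- For a matroid of rank `r+1` on a linearly ordered (finite)
ground set, the map sending a full chain of flats to its Jordan–Hölder string
`(b_1, …, b_{r+1})`, `b_i = min (F_i \ F_{i−1})`, is injective, and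
`{b_1, …, b_{r+1}}` is a basis of `M`. -/
theorem stmt13 {α : Type*} [LinearOrder α] (M : Matroid α) [M.Finite] {r : ℕ}
    (hrk : mrk M M.E = r + 1)
    (F G : Fin (r + 2) → Set α) (hF : IsFullChain M r F) (hG : IsFullChain M r G)
    (b c : Fin (r + 1) → α)
    (hb : ∀ i : Fin (r + 1), IsLeast (F i.succ \ F i.castSucc) (b i))
    (hc : ∀ i : Fin (r + 1), IsLeast (G i.succ \ G i.castSucc) (c i)) :
    (b = c → F = G) ∧ M.IsBase (Set.range b) := by
  have hcF := chain_closure hrk F hF b hb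
  have hcG := chain_closure hrk G hG c hc
  have hrange : {j : Fin (r + 1) | (j : ℕ) < r + 1} = Set.univ := by
    ext j; simpa using j.isLt
  constructor
  · intro hbc
    funext i
    have h1 := hcF i.val i.isLt
    have h2 := hcG i.val i.isLt
    rw [Fin.eta] at h1 h2
    rw [h1, h2, hbc]
  · have h := hcF (r + 1) (by omega)
    have hlasteq : (⟨r + 1, by omega⟩ : Fin (r + 2)) = Fin.last (r + 1) := rfl
    rw [hlasteq, hF.2.1, hrange, Set.image_univ] at h
    have hind := (chain_indep F hF b hb (r + 1) le_rfl).1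
    rw [hrange, Set.image_univ] at hind
    exact hind.isBase_of_ground_subset_closure h.subset
end

section
/- Let A → B be a rank-preserving weak map of matroids and define the auxiliary pseudo-matroid A' to consist of those flats F of A with rk_B(φ_B(F)) = rk_A(F). Then the poset F(A') ordered by inclusion is graded by rk_A: if F, F' ∈ F(A') with F ⊊ F' and rk_A(F') > rk_A(F) + 1, then there exists G ∈ F(A') with F ⊊ G ⊊ F' and rk_A(G) = rk_A(F) + 1. -/
section aux

open Set

variable {α : Type*} {M : Matroid α} {I J X : Set α}

lemma mrk_bddAbove (M : Matroid α) [M.Finite] (X : Set α) :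
    BddAbove {n | ∃ I, M.Indep I ∧ I ⊆ X ∧ I.ncard = n} :=
  ⟨M.E.ncard, fun n ⟨I, hI, _, hc⟩ => hc ▸ ncard_le_ncard hI.subset_ground M.ground_finite⟩

lemma mrk_nonempty (M : Matroid α) (X : Set α) :
    {n | ∃ I, M.Indep I ∧ I ⊆ X ∧ I.ncard = n}.Nonempty :=
  ⟨0, ∅, M.empty_indep, empty_subset _, ncard_empty _⟩

lemma indep_ncard_le_mrk [M.Finite] (hI : M.Indep I) (h : I ⊆ X) : I.ncard ≤ mrk M X :=
  le_csSup (mrk_bddAbove M X) ⟨I, hI, h, rfl⟩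

lemma mrk_eq_of_basis' [M.Finite] (hI : M.IsBasis' I X) : mrk M X = I.ncard := by
  refine le_antisymm (csSup_le (mrk_nonempty M X) ?_) (indep_ncard_le_mrk hI.indep hI.subset)
  rintro n ⟨J, hJ, hJX, rfl⟩
  obtain ⟨K, hK, hJK⟩ := hJ.subset_isBasis'_of_subset hJX
  have hKfin : K.Finite := M.ground_finite.subset hK.indep.subset_ground
  have hcard : K.ncard = I.ncard := by
    rw [ncard_def, hK.encard_eq_encard hI, ← ncard_def]
  exact hcard ▸ ncard_le_ncard hJK hKfin

lemma mrk_closure_eq (M : Matroid α) [M.Finite] (X : Set α) :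
    mrk M (M.closure X) = mrk M X := by
  obtain ⟨I, hI⟩ := M.exists_isBasis' X
  rw [mrk_eq_of_basis' hI, mrk_eq_of_basis' hI.isBasis_closure_right.isBasis']

lemma flat_closure' (M : Matroid α) (X : Set α) : M.IsFlat (M.closure X) :=
  ⟨fun _ Y hI hIY => hIY.subset_closure.trans
      (by rw [hI.closure_eq_closure, M.closure_closure]),
    M.closure_subset_ground X⟩

end aux

/-- Let `A → B` be a rank-preserving weak map, and let the
auxiliary pseudo-matroid `A'` consist of the flats `F` of `A` with
`rk_B(φ_B(F)) = rk_A(F)`. Then `F(A')`, ordered by inclusion, is graded by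
`rk_A`: if `F ⊊ F'` in `F(A')` with `rk_A(F') > rk_A(F) + 1`, then some
`G ∈ F(A')` satisfies `F ⊊ G ⊊ F'` with `rk_A(G) = rk_A(F) + 1`. -/
theorem stmt16 {α : Type*} (A B : Matroid α) [A.Finite] [B.Finite]
    (hE : A.E = B.E) (hweak : ∀ I : Set α, B.Indep I → A.Indep I)
    (hrk : mrk A A.E = mrk B B.E)
    (F F' : Set α)
    (hF : A.IsFlat F ∧ mrk B (B.closure F) = mrk A F)
    (hF' : A.IsFlat F' ∧ mrk B (B.closure F') = mrk A F')
    (hss : F ⊂ F') (hgap : mrk A F + 1 < mrk A F') :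
    ∃ G : Set α, (A.IsFlat G ∧ mrk B (B.closure G) = mrk A G) ∧
      F ⊂ G ∧ G ⊂ F' ∧ mrk A G = mrk A F + 1 := by
  obtain ⟨hFflat, hFrk⟩ := hF
  obtain ⟨hF'flat, hF'rk⟩ := hF'
  obtain ⟨I, hI⟩ := B.exists_isBasis' F
  have hIfin : I.Finite := B.ground_finite.subset hI.indep.subset_ground
  have hIcard : I.ncard = mrk A F := by
    rw [← hFrk, mrk_closure_eq, mrk_eq_of_basis' hI]
  have hIA : A.Indep I := hweak I hI.indep
  have hIF : I ⊆ F := hI.subset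
  -- extend `I` to a `B`-basis `J` of `F'`
  obtain ⟨J, hJ, hIJ⟩ := hI.indep.subset_isBasis'_of_subset (hIF.trans hss.subset)
  have hJcard : J.ncard = mrk A F' := by
    rw [← hF'rk, mrk_closure_eq, mrk_eq_of_basis' hJ]
  have hJA : A.Indep J := hweak J hJ.indep
  -- pick `x ∈ J \ I`
  have hne : I ≠ J := by
    rintro rfl; rw [hIcard] at hJcard; omega
  obtain ⟨x, hxJ, hxI⟩ := Set.exists_of_ssubset (hIJ.ssubset_of_ne hne)
  have hxIindep : A.Indep (insert x I) := hJA.subset (Set.insert_subset hxJ hIJ)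
  have hxF : x ∉ F := by
    intro hxF
    have hle := indep_ncard_le_mrk hxIindep (Set.insert_subset hxF hIF)
    rw [Set.ncard_insert_of_notMem hxI hIfin] at hle
    omega
  have hxE : x ∈ A.E := hJA.subset_ground hxJ
  -- `I` is an `A`-basis of `F`
  have hIbasisA : A.IsBasis I F := by
    obtain ⟨K, hK, hIK⟩ := hIA.subset_isBasis'_of_subset hIF
    have hKfin : K.Finite := A.ground_finite.subset hK.indep.subset_ground
    have hKcard : K.ncard = I.ncard := by rw [mrk_eq_of_basis' hK] at hIcard; omega
    have : I = K := Set.eq_of_subset_of_ncard_le hIK hKcard.le hKfin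
    exact (this ▸ hK).isBasis hFflat.subset_ground
  have hbasisG : A.IsBasis (insert x I) (insert x F) :=
    hIbasisA.insert_isBasis_insert hxIindep
  refine ⟨A.closure (insert x F), ⟨flat_closure' A _, ?_⟩, ?_, ?_, ?_⟩
  case _ =>
    -- rank condition for G
    have hrkG : mrk A (A.closure (insert x F)) = mrk A F + 1 := by
      rw [mrk_closure_eq, mrk_eq_of_basis' hbasisG.isBasis',
        Set.ncard_insert_of_notMem hxI hIfin, hIcard]
    have hFG : F ⊆ A.closure (insert x F) :=
      (Set.subset_insert x F).trans
        (A.subset_closure _ (Set.insert_subset hxE hFflat.subset_ground))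
    have hxG : x ∈ A.closure (insert x F) :=
      A.subset_closure _ (Set.insert_subset hxE hFflat.subset_ground) (Set.mem_insert x F)
    have hle : mrk B (A.closure (insert x F)) ≤ mrk A (A.closure (insert x F)) := by
      refine csSup_le (mrk_nonempty _ _) ?_
      rintro n ⟨K, hK, hKG, rfl⟩
      exact indep_ncard_le_mrk (hweak K hK) hKG
    have hge : mrk A F + 1 ≤ mrk B (A.closure (insert x F)) := by
      have hBxI : B.Indep (insert x I) := hJ.indep.subset (Set.insert_subset hxJ hIJ)
      have := indep_ncard_le_mrk hBxI (Set.insert_subset hxG (hIF.trans hFG))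
      rwa [Set.ncard_insert_of_notMem hxI hIfin, hIcard] at this
    rw [mrk_closure_eq, hrkG]
    omega
  case _ =>
    -- F ⊊ G
    refine HasSubset.Subset.ssubset_of_ne
      ((Set.subset_insert x F).trans
        (A.subset_closure _ (Set.insert_subset hxE hFflat.subset_ground))) ?_
    intro h
    exact hxF (h ▸ A.subset_closure _ (Set.insert_subset hxE hFflat.subset_ground)
      (Set.mem_insert x F))
  case _ =>
    -- G ⊊ F'
    have hsub : A.closure (insert x F) ⊆ F' := by
      have h1 : insert x F ⊆ F' := Set.insert_subset (hJ.subset hxJ) hss.subset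
      exact (A.closure_subset_closure h1).trans_eq hF'flat.closure
    refine hsub.ssubset_of_ne ?_
    intro h
    have hrkG : mrk A (A.closure (insert x F)) = mrk A F + 1 := by
      rw [mrk_closure_eq, mrk_eq_of_basis' hbasisG.isBasis',
        Set.ncard_insert_of_notMem hxI hIfin, hIcard]
    rw [h] at hrkG
    omega
  case _ =>
    rw [mrk_closure_eq, mrk_eq_of_basis' hbasisG.isBasis',
      Set.ncard_insert_of_notMem hxI hIfin, hIcard]
end

section
/- A flat F of A belongs to the auxiliary pseudo-matroid A' (i.e., rk_B(φ_B(F)) = rk_A(F)) if and only if F contains a subset that is simultaneously a basis of F in A and independent in B. -/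
lemma mrk_eq_of_basis {α : Type*} {M : Matroid α} [M.Finite] {J X : Set α}
    (hJ : M.IsBasis J X) : mrk M X = J.ncard := by
  apply IsGreatest.csSup_eq
  constructor
  · exact ⟨J, hJ.indep, hJ.subset, rfl⟩
  · rintro n ⟨I, hI, hIX, rfl⟩
    obtain ⟨J', hJ', hIJ'⟩ := hI.subset_isBasis_of_subset hIX hJ.subset_ground
    have h1 : I.ncard ≤ J'.ncard :=
      Set.ncard_le_ncard hIJ' (hJ'.indep.finite)
    have h2 : J'.ncard = J.ncard := by
      rw [Set.ncard_def, hJ'.encard_eq_encard hJ, ← Set.ncard_def]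
    omega

/-- A flat `F` of `A` belongs to the auxiliary pseudo-matroid
`A'` (i.e. `rk_B(φ_B(F)) = rk_A(F)`) iff `F` contains a subset that is
simultaneously a basis of `F` in `A` and independent in `B`. -/
theorem stmt17 {α : Type*} (A B : Matroid α) [A.Finite] [B.Finite]
    (hE : A.E = B.E) (hweak : ∀ I : Set α, B.Indep I → A.Indep I)
    (F : Set α) (hF : A.IsFlat F) :
    mrk B (B.closure F) = mrk A F ↔ ∃ I : Set α, I ⊆ F ∧ A.IsBasis I F ∧ B.Indep I := by
  have hFE : F ⊆ A.E := hF.subset_ground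
  have hFB : F ⊆ B.E := hE ▸ hFE
  obtain ⟨K, hK⟩ := B.exists_isBasis F hFB
  have hKc : B.IsBasis K (B.closure F) := hK.isBasis_closure_right
  have hmB : mrk B (B.closure F) = K.ncard := mrk_eq_of_basis hKc
  obtain ⟨J, hJ⟩ := A.exists_isBasis F hFE
  have hmA : mrk A F = J.ncard := mrk_eq_of_basis hJ
  constructor
  · intro h
    -- K is B-indep, hence A-indep, subset of F, with max cardinality = rk_A F
    refine ⟨K, hK.subset, ?_, hK.indep⟩
    have hKA : A.Indep K := hweak K hK.indep
    obtain ⟨J', hJ', hKJ'⟩ := hKA.subset_isBasis_of_subset hK.subset hFE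
    have hcard : J'.ncard = J.ncard := by
      rw [Set.ncard_def, hJ'.encard_eq_encard hJ, ← Set.ncard_def]
    have : K.ncard = J'.ncard := by omega
    have hKeq : K = J' :=
      Set.eq_of_subset_of_ncard_le hKJ' (by omega) hJ'.indep.finite
    rwa [hKeq]
  · rintro ⟨I, hIF, hIbasis, hIB⟩
    rw [hmB, hmA]
    -- |K| ≥ |I| since I is B-indep in F; |K| ≤ |J| since K is A-indep in F
    have h1 : I.ncard ≤ K.ncard := by
      obtain ⟨K', hK', hIK'⟩ := hIB.subset_isBasis_of_subset hIF hFB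
      have : K'.ncard = K.ncard := by
        rw [Set.ncard_def, hK'.encard_eq_encard hK, ← Set.ncard_def]
      have := Set.ncard_le_ncard hIK' hK'.indep.finite
      omega
    have h2 : K.ncard ≤ J.ncard := by
      obtain ⟨J', hJ', hKJ'⟩ := (hweak K hK.indep).subset_isBasis_of_subset hK.subset hFE
      have : J'.ncard = J.ncard := by
        rw [Set.ncard_def, hJ'.encard_eq_encard hJ, ← Set.ncard_def]
      have := Set.ncard_le_ncard hKJ' hJ'.indep.finite
      omega
    have h3 : I.ncard = J.ncard := by
      rw [Set.ncard_def, hIbasis.encard_eq_encard hJ, ← Set.ncard_def]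
    omega
end

section
/- Let M be a matroid of rank r+1, k[M] the Stanley–Reisner ring of the order complex of its proper lattice of flats, and for i ∈ [r] let θ_i = Σ_{rk F = i} x_F. For S ⊆ [r], a linear functional f = Σ_{fl(C)=S} b_C ε_C on the degree-S component of k[M] annihilates the degree-S component of the ideal (θ_1,...,θ_r) if and only if for every i ∈ S and every chain C' of flag S \ {i}, the sum of b_D over all chains D of flag S containing C' is zero. -/
open scoped Classical

set_option synthInstance.maxHeartbeats 1000000
set_option maxHeartbeats 1000000

/-- The vertex type of the order complex `Δ(M)`: the flats of `M` other than
the minimal flat and the ground set. -/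
def FlatV {α : Type*} (M : Matroid α) : Type _ :=
  {F : Set α // M.IsFlat F ∧ F ≠ M.closure ∅ ∧ F ≠ M.E}

noncomputable instance {α : Type*} [Fintype α] (M : Matroid α) : Fintype (FlatV M) := by
  unfold FlatV; infer_instance

/-- A finite set of proper flats forming a chain (totally ordered by
inclusion), i.e. a face of the order complex `Δ(M)`. -/
def IsChainF {α : Type*} (M : Matroid α) (C : Finset (FlatV M)) : Prop :=
  ∀ F ∈ C, ∀ G ∈ C, F.1 ⊆ G.1 ∨ G.1 ⊆ F.1

/-- The flag of a chain: the set of ranks of its flats. -/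
noncomputable def flagOf {α : Type*} (M : Matroid α) (C : Finset (FlatV M)) : Set ℕ :=
  (fun F : FlatV M => mrk M F.1) '' (C : Set (FlatV M))

/-- The Stanley–Reisner ideal of the order complex of `M`: generated by the
products of variables corresponding to incomparable flats. -/
noncomputable def srMIdeal (k : Type*) [Field k] {α : Type*} [Fintype α] (M : Matroid α) :
    Ideal (MvPolynomial (FlatV M) k) :=
  Ideal.span {p | ∃ F G : FlatV M, ¬(F.1 ⊆ G.1 ∨ G.1 ⊆ F.1) ∧
    p = MvPolynomial.X F * MvPolynomial.X G}

/-- The Stanley–Reisner ring `k[M]` of the order complex of the proper part of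
the lattice of flats of `M`. -/
abbrev SRM (k : Type*) [Field k] {α : Type*} [Fintype α] (M : Matroid α) :=
  MvPolynomial (FlatV M) k ⧸ srMIdeal k M

/-- The (image in `k[M]` of the) squarefree monomial `x_C = ∏_{F ∈ C} x_F`. -/
noncomputable def xC (k : Type*) [Field k] {α : Type*} [Fintype α] (M : Matroid α)
    (C : Finset (FlatV M)) : SRM k M :=
  Ideal.Quotient.mk (srMIdeal k M) (∏ F ∈ C, MvPolynomial.X F)

/-- `θ_i = ∑_{rk F = i} x_F` in `k[M]`. -/
noncomputable def theta (k : Type*) [Field k] {α : Type*} [Fintype α] (M : Matroid α)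
    (i : ℕ) : SRM k M :=
  Ideal.Quotient.mk (srMIdeal k M)
    (∑ F ∈ Finset.univ.filter (fun F : FlatV M => mrk M F.1 = i), MvPolynomial.X F)

/-- The degree-`S` component of `k[M]` (for the fine grading): the span of the
monomials `x_C` over chains `C` of flag `S`. -/
noncomputable def degS (k : Type*) [Field k] {α : Type*} [Fintype α] (M : Matroid α)
    (S : Set ℕ) : Submodule k (SRM k M) :=
  Submodule.span k
    {x | ∃ C : Finset (FlatV M), IsChainF M C ∧ flagOf M C = S ∧ x = xC k M C}
section RankLemmas
variable {α : Type*} [Fintype α] (M : Matroid α)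

lemma mrk_exists (X : Set α) : ∃ I, M.Indep I ∧ I ⊆ X ∧ I.ncard = mrk M X := by
  have hbdd : BddAbove {n | ∃ I, M.Indep I ∧ I ⊆ X ∧ I.ncard = n} := by
    refine ⟨Fintype.card α, fun n hn => ?_⟩
    obtain ⟨I, -, -, rfl⟩ := hn
    exact Set.ncard_le_ncard (Set.subset_univ I) Set.finite_univ |>.trans
      (by simp [Set.ncard_univ])
  have hne : {n | ∃ I, M.Indep I ∧ I ⊆ X ∧ I.ncard = n}.Nonempty :=
    ⟨0, ∅, M.empty_indep, Set.empty_subset X, by simp⟩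
  have := Nat.sSup_mem hne hbdd
  exact this

lemma le_mrk {X I : Set α} (hI : M.Indep I) (hIX : I ⊆ X) : I.ncard ≤ mrk M X := by
  have hbdd : BddAbove {n | ∃ I, M.Indep I ∧ I ⊆ X ∧ I.ncard = n} := by
    refine ⟨Fintype.card α, fun n hn => ?_⟩
    obtain ⟨I, -, -, rfl⟩ := hn
    exact Set.ncard_le_ncard (Set.subset_univ I) Set.finite_univ |>.trans
      (by simp [Set.ncard_univ])
  exact le_csSup hbdd ⟨I, hI, hIX, rfl⟩

lemma mrk_lt_of_flat_ssubset {F G : Set α} (hF : M.IsFlat F) (hG : M.IsFlat G)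
    (hFG : F ⊆ G) (hne : F ≠ G) : mrk M F < mrk M G := by
  obtain ⟨I, hI, hIF, hcard⟩ := mrk_exists M F
  obtain ⟨e, heG, heF⟩ := Set.exists_of_ssubset (hFG.ssubset_of_ne hne)
  have heI : e ∉ I := fun h => heF (hIF h)
  have hecl : e ∉ M.closure I := by
    intro h
    exact heF (hF.closure ▸ (M.closure_subset_closure hIF).trans
      (by rw [hF.closure]) h)
  have hins : M.Indep (insert e I) := by
    rw [Matroid.Indep.insert_indep_iff_of_notMem hI heI]
    exact ⟨hG.subset_ground heG, hecl⟩
  have : (insert e I).ncard = mrk M F + 1 := by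
    rw [Set.ncard_insert_of_notMem heI (Set.toFinite I), hcard]
  calc mrk M F < mrk M F + 1 := Nat.lt_succ_self _
    _ ≤ mrk M G := this ▸ le_mrk M hins (Set.insert_subset heG (hIF.trans hFG))

lemma FlatV.eq_of_subset_rank_eq {F G : FlatV M} (h : F.1 ⊆ G.1)
    (hr : mrk M F.1 = mrk M G.1) : F = G := by
  by_contra hne
  exact absurd hr (mrk_lt_of_flat_ssubset M F.2.1 G.2.1 h
    (fun h' => hne (Subtype.ext h'))).ne

end RankLemmas
set_option linter.unusedSectionVars false
section ChainLemmas
variable {α : Type*} [Fintype α] {M : Matroid α}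

lemma IsChainF.subset {C D : Finset (FlatV M)} (hD : IsChainF M D) (h : C ⊆ D) :
    IsChainF M C := fun F hF G hG => hD F (h hF) G (h hG)

lemma IsChainF.rank_inj {C : Finset (FlatV M)} (hC : IsChainF M C)
    {F G : FlatV M} (hF : F ∈ C) (hG : G ∈ C) (h : mrk M F.1 = mrk M G.1) : F = G := by
  rcases hC F hF G hG with h' | h'
  · exact FlatV.eq_of_subset_rank_eq M h' h
  · exact (FlatV.eq_of_subset_rank_eq M h' h.symm).symm

lemma flagOf_insert (C : Finset (FlatV M)) (F : FlatV M) :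
    flagOf M (insert F C) = insert (mrk M F.1) (flagOf M C) := by
  unfold flagOf
  rw [Finset.coe_insert, Set.image_insert_eq]

lemma mem_flagOf {C : Finset (FlatV M)} {i : ℕ} :
    i ∈ flagOf M C ↔ ∃ F ∈ C, mrk M F.1 = i := by
  unfold flagOf; simp

end ChainLemmas

section IndC
variable {k : Type*} [Field k] {α : Type*} [Fintype α] {M : Matroid α}

noncomputable def indC (C : Finset (FlatV M)) : FlatV M →₀ ℕ :=
  ∑ F ∈ C, Finsupp.single F 1

lemma indC_apply (C : Finset (FlatV M)) (F : FlatV M) :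
    indC C F = if F ∈ C then 1 else 0 := by
  classical
  rw [indC, Finset.sum_apply']
  simp only [Finsupp.single_apply]
  rw [Finset.sum_ite_eq' C F (fun _ => 1)]

lemma indC_support (C : Finset (FlatV M)) : (indC C).support = C := by
  ext F
  simp [Finsupp.mem_support_iff, indC_apply]

lemma indC_sqf (C : Finset (FlatV M)) (F : FlatV M) : indC C F ≤ 1 := by
  rw [indC_apply]; split <;> omega

lemma indC_of_sqf {d : FlatV M →₀ ℕ} (h : ∀ F, d F ≤ 1) : indC d.support = d := by
  ext F
  rw [indC_apply]
  have := h F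
  by_cases hF : F ∈ d.support
  · rw [if_pos hF]
    have := Finsupp.mem_support_iff.1 hF
    omega
  · rw [if_neg hF]
    have := Finsupp.notMem_support_iff.1 hF
    omega

lemma indC_insert {C : Finset (FlatV M)} {F : FlatV M} (h : F ∉ C) :
    indC (insert F C) = Finsupp.single F 1 + indC C := by
  rw [indC, Finset.sum_insert h]; rfl

lemma monomial_indC (C : Finset (FlatV M)) :
    (MvPolynomial.monomial (indC C) (1 : k)) = ∏ F ∈ C, MvPolynomial.X F := by
  classical
  induction C using Finset.induction_on with
  | empty => simp [indC]
  | insert F C h ih =>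
    rw [Finset.prod_insert h, ← ih, indC_insert h, MvPolynomial.X, MvPolynomial.monomial_mul,
      one_mul]

lemma support_add_single (d : FlatV M →₀ ℕ) (F : FlatV M) :
    (d + Finsupp.single F 1).support = insert F d.support := by
  ext G
  simp only [Finsupp.mem_support_iff, Finsupp.add_apply, Finsupp.single_apply,
    Finset.mem_insert]
  by_cases h : G = F
  · simp [h]
  · simp [h, Ne.symm h]

end IndC
section Psi
variable {k : Type*} [Field k] {α : Type*} [Fintype α] {M : Matroid α}

lemma monomial_mem_srMIdeal {d : FlatV M →₀ ℕ} (c : k)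
    (h : ¬ IsChainF M d.support) : MvPolynomial.monomial d c ∈ srMIdeal k M := by
  simp only [IsChainF, not_forall] at h
  obtain ⟨F, hF, G, hG, hFG⟩ := h
  have hne : F ≠ G := by rintro rfl; exact hFG (Or.inl subset_rfl)
  set u : FlatV M →₀ ℕ := Finsupp.single F 1 + Finsupp.single G 1 with hu
  have hud : u ≤ d := by
    rw [Finsupp.le_def]
    intro s
    have hdF := Finsupp.mem_support_iff.1 hF
    have hdG := Finsupp.mem_support_iff.1 hG
    simp only [hu, Finsupp.add_apply, Finsupp.single_apply]
    split_ifs with hA hB hB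
    · exact absurd (hA.trans hB.symm) hne
    · subst hA; omega
    · subst hB; omega
    · omega
  have key : MvPolynomial.monomial d c =
      MvPolynomial.monomial (d - u) c * (MvPolynomial.X F * MvPolynomial.X G) := by
    rw [MvPolynomial.X, MvPolynomial.X, MvPolynomial.monomial_mul,
      MvPolynomial.monomial_mul, mul_one, mul_one, ← hu, tsub_add_cancel_of_le hud]
  rw [key]
  exact Ideal.mul_mem_left _ _ (Ideal.subset_span ⟨F, G, hFG, rfl⟩)

variable (M) in
/-- The linear functional on the polynomial ring extracting the `b`-weighted sum of
coefficients of squarefree chain monomials of flag `S`. -/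
noncomputable def psiF (S : Set ℕ) (b : Finset (FlatV M) → k) :
    MvPolynomial (FlatV M) k →ₗ[k] k :=
  ∑ C : Finset (FlatV M),
    (if IsChainF M C ∧ flagOf M C = S then b C else 0) • MvPolynomial.lcoeff k (indC C)

lemma psiF_monomial (S : Set ℕ) (b : Finset (FlatV M) → k) (d : FlatV M →₀ ℕ) (c : k) :
    psiF M S b (MvPolynomial.monomial d c) =
      if (∀ F, d F ≤ 1) ∧ IsChainF M d.support ∧ flagOf M d.support = S then
        b d.support * c else 0 := by
  classical
  rw [psiF, LinearMap.sum_apply]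
  simp only [LinearMap.smul_apply, MvPolynomial.lcoeff_apply, MvPolynomial.coeff_monomial,
    smul_eq_mul]
  by_cases hsq : ∀ F, d F ≤ 1
  · rw [Finset.sum_eq_single d.support]
    · rw [indC_of_sqf hsq, if_pos rfl]
      by_cases h : IsChainF M d.support ∧ flagOf M d.support = S
      · rw [if_pos h, if_pos ⟨hsq, h⟩]
      · rw [if_neg h, if_neg (fun hh => h hh.2), zero_mul]
    · intro C _ hC
      have hd : d ≠ indC C := fun h => hC (by rw [h, indC_support])
      rw [if_neg hd, mul_zero]
    · intro h; exact absurd (Finset.mem_univ _) h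
  · rw [if_neg (fun h => hsq h.1)]
    refine Finset.sum_eq_zero fun C _ => ?_
    have hd : d ≠ indC C := fun h => hsq (h ▸ fun F => indC_sqf C F)
    rw [if_neg hd, mul_zero]

end Psi
section PsiVanish
variable {k : Type*} [Field k] {α : Type*} [Fintype α] {M : Matroid α}

lemma coeff_indC_mul_incomp {C : Finset (FlatV M)} (hC : IsChainF M C)
    {F G : FlatV M} (hFG : ¬(F.1 ⊆ G.1 ∨ G.1 ⊆ F.1)) (q : MvPolynomial (FlatV M) k) :
    MvPolynomial.coeff (indC C) (q * (MvPolynomial.X F * MvPolynomial.X G)) = 0 := by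
  classical
  rw [← mul_assoc, MvPolynomial.coeff_mul_X']
  by_cases hG : G ∈ C
  · rw [if_pos (by rw [indC_support]; exact hG)]
    have hF : F ∉ C := fun hF => hFG (hC F hF G hG)
    rw [MvPolynomial.coeff_mul_X', if_neg]
    intro h
    have := Finsupp.mem_support_iff.1 h
    rw [Finsupp.tsub_apply, indC_apply, if_neg hF] at this
    simp at this
  · rw [if_neg (by rw [indC_support]; exact hG)]

lemma psiF_mul_gen (S : Set ℕ) (b : Finset (FlatV M) → k)
    {F G : FlatV M} (hFG : ¬(F.1 ⊆ G.1 ∨ G.1 ⊆ F.1)) (q : MvPolynomial (FlatV M) k) :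
    psiF M S b (q * (MvPolynomial.X F * MvPolynomial.X G)) = 0 := by
  rw [psiF, LinearMap.sum_apply]
  refine Finset.sum_eq_zero fun C _ => ?_
  simp only [LinearMap.smul_apply, MvPolynomial.lcoeff_apply, smul_eq_mul]
  by_cases hC : IsChainF M C ∧ flagOf M C = S
  · rw [coeff_indC_mul_incomp hC.1 hFG, mul_zero]
  · rw [if_neg hC, zero_mul]

lemma psiF_vanish (S : Set ℕ) (b : Finset (FlatV M) → k)
    {x : MvPolynomial (FlatV M) k} (hx : x ∈ srMIdeal k M) : psiF M S b x = 0 := by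
  have main : ∀ y ∈ srMIdeal k M, ∀ q, psiF M S b (q * y) = 0 := by
    intro y hy
    refine Submodule.span_induction ?_ ?_ ?_ ?_ hy
    · rintro p ⟨F, G, hFG, rfl⟩ q
      exact psiF_mul_gen S b hFG q
    · intro q; rw [mul_zero, map_zero]
    · intro u v _ _ hu hv q
      rw [mul_add, map_add, hu, hv, add_zero]
    · intro a u _ hu q
      rw [smul_eq_mul, ← mul_assoc, hu]
  simpa using main x hx 1

lemma psiF_eq_of_mk_eq (S : Set ℕ) (b : Finset (FlatV M) → k)
    {p q : MvPolynomial (FlatV M) k}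
    (h : Ideal.Quotient.mk (srMIdeal k M) p = Ideal.Quotient.mk (srMIdeal k M) q) :
    psiF M S b p = psiF M S b q := by
  have hmem : p - q ∈ srMIdeal k M := Ideal.Quotient.eq.1 h
  have := psiF_vanish S b hmem
  rw [map_sub, sub_eq_zero] at this
  exact this

variable (M) in
/-- A set-theoretic section of the quotient map. -/
noncomputable def secM : SRM k M → MvPolynomial (FlatV M) k :=
  Function.surjInv Ideal.Quotient.mk_surjective

lemma mk_secM (x : SRM k M) : Ideal.Quotient.mk (srMIdeal k M) (secM M x) = x :=
  Function.surjInv_eq _ _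

lemma mk_smul (c : k) (p : MvPolynomial (FlatV M) k) :
    Ideal.Quotient.mk (srMIdeal k M) (c • p) =
      c • Ideal.Quotient.mk (srMIdeal k M) p := by
  rw [← Ideal.Quotient.mkₐ_eq_mk k, map_smul]

variable (M) in
noncomputable def psiQ (S : Set ℕ) (b : Finset (FlatV M) → k) : SRM k M →ₗ[k] k where
  toFun x := psiF M S b (secM M x)
  map_add' x y := by
    rw [psiF_eq_of_mk_eq S b (p := secM M (x + y)) (q := secM M x + secM M y)
      (by rw [map_add, mk_secM, mk_secM, mk_secM]), map_add]
  map_smul' c x := by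
    rw [psiF_eq_of_mk_eq S b (p := secM M (c • x)) (q := c • secM M x)
      (by rw [mk_smul, mk_secM, mk_secM]), map_smul, RingHom.id_apply]

lemma psiQ_mk (S : Set ℕ) (b : Finset (FlatV M) → k) (p : MvPolynomial (FlatV M) k) :
    psiQ M S b (Ideal.Quotient.mk (srMIdeal k M) p) = psiF M S b p := by
  show psiF M S b (secM M (Ideal.Quotient.mk (srMIdeal k M) p)) = psiF M S b p
  exact psiF_eq_of_mk_eq S b (by rw [mk_secM])

end PsiVanish
section Key
variable {k : Type*} [Field k] {α : Type*} [Fintype α] {M : Matroid α}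

variable (M) in
/-- The polynomial representative of `θ_i`. -/
noncomputable def thetaP (i : ℕ) : MvPolynomial (FlatV M) k :=
  ∑ F ∈ Finset.univ.filter (fun F : FlatV M => mrk M F.1 = i), MvPolynomial.X F

lemma theta_eq_mk (i : ℕ) :
    theta k M i = Ideal.Quotient.mk (srMIdeal k M) (thetaP M i) := rfl

lemma monomial_mul_thetaP (d : FlatV M →₀ ℕ) (c : k) (i : ℕ) :
    MvPolynomial.monomial d c * thetaP M i =
      ∑ F ∈ Finset.univ.filter (fun F : FlatV M => mrk M F.1 = i),
        MvPolynomial.monomial (d + Finsupp.single F 1) c := by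
  rw [thetaP, Finset.mul_sum]
  refine Finset.sum_congr rfl fun F _ => ?_
  rw [MvPolynomial.X, MvPolynomial.monomial_mul, mul_one]

lemma flag_insert_eq (S : Set ℕ) {i : ℕ} (hiS : i ∈ S) {C' : Finset (FlatV M)}
    (hfl : flagOf M C' = S \ {i}) (F : FlatV M) (hF : mrk M F.1 = i) :
    flagOf M (insert F C') = S := by
  rw [flagOf_insert, hF, hfl, Set.insert_diff_singleton, Set.insert_eq_self.2 hiS]

lemma not_mem_of_rank_not_mem_flag {C' : Finset (FlatV M)} {F : FlatV M} {i : ℕ}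
    (hF : mrk M F.1 = i) (h : i ∉ flagOf M C') : F ∉ C' :=
  fun hmem => h (mem_flagOf.2 ⟨F, hmem, hF⟩)

lemma psiF_monomial_mul_theta_key (S : Set ℕ) (b : Finset (FlatV M) → k)
    {i : ℕ} (hiS : i ∈ S) {d : FlatV M →₀ ℕ} (c : k) (hsq : ∀ F, d F ≤ 1)
    (hch : IsChainF M d.support) (hfl : flagOf M d.support = S \ {i}) :
    psiF M S b (MvPolynomial.monomial d c * thetaP M i) =
      c * ∑ F ∈ Finset.univ.filter
          (fun F : FlatV M => mrk M F.1 = i ∧ IsChainF M (insert F d.support)),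
        b (insert F d.support) := by
  classical
  have hinotin : i ∉ flagOf M d.support := by rw [hfl]; simp
  have hR : ∑ F ∈ (Finset.univ.filter (fun F : FlatV M => mrk M F.1 = i)).filter
        (fun F => IsChainF M (insert F d.support)), b (insert F d.support) =
      ∑ F ∈ Finset.univ.filter (fun F : FlatV M => mrk M F.1 = i),
        if IsChainF M (insert F d.support) then b (insert F d.support) else 0 :=
    Finset.sum_filter _ _
  rw [monomial_mul_thetaP, map_sum, ← Finset.filter_filter, hR, Finset.mul_sum]
  refine Finset.sum_congr rfl fun F hF => ?_
  rw [Finset.mem_filter] at hF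
  obtain ⟨-, hFi⟩ := hF
  have hFnot : F ∉ d.support := not_mem_of_rank_not_mem_flag hFi hinotin
  have hdF0 : d F = 0 := Finsupp.notMem_support_iff.1 hFnot
  rw [psiF_monomial, support_add_single]
  have hsq' : ∀ G, (d + (Finsupp.single F 1 : FlatV M →₀ ℕ)) G ≤ 1 := by
    intro G
    rw [Finsupp.add_apply, Finsupp.single_apply]
    by_cases hGF : F = G
    · subst hGF; rw [if_pos rfl, hdF0]
    · rw [if_neg hGF]; simpa using hsq G
  by_cases hch' : IsChainF M (insert F d.support)
  · rw [if_pos ⟨hsq', hch', flag_insert_eq S hiS hfl F hFi⟩, if_pos hch', mul_comm]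
  · rw [if_neg (fun h => hch' h.2.1), if_neg hch', mul_zero]


lemma psiF_monomial_mul_theta_zero (S : Set ℕ) (b : Finset (FlatV M) → k)
    (i : ℕ) (d : FlatV M →₀ ℕ) (c : k)
    (h : ¬((∀ F, d F ≤ 1) ∧ IsChainF M d.support ∧ flagOf M d.support = S \ {i} ∧ i ∈ S)) :
    psiF M S b (MvPolynomial.monomial d c * thetaP M i) = 0 := by
  classical
  rw [monomial_mul_thetaP, map_sum]
  refine Finset.sum_eq_zero fun F hF => ?_
  rw [Finset.mem_filter] at hF
  obtain ⟨-, hFi⟩ := hF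
  rw [psiF_monomial, support_add_single, if_neg]
  rintro ⟨hsq', hch', hfl'⟩
  have hsq : ∀ G, d G ≤ 1 := by
    intro G
    have := hsq' G
    rw [Finsupp.add_apply] at this
    omega
  have hdF0 : d F = 0 := by
    have := hsq' F
    rw [Finsupp.add_apply, Finsupp.single_apply, if_pos rfl] at this
    omega
  have hFnot : F ∉ d.support := Finsupp.notMem_support_iff.2 hdF0
  have hch : IsChainF M d.support := hch'.subset (Finset.subset_insert _ _)
  have hflins : insert i (flagOf M d.support) = S := by
    rw [← hFi, ← flagOf_insert, hfl']
  have hiS : i ∈ S := hflins ▸ Set.mem_insert _ _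
  have hinotin : i ∉ flagOf M d.support := by
    intro hin
    obtain ⟨G, hG, hGi⟩ := mem_flagOf.1 hin
    have hGF : G = F := hch'.rank_inj (Finset.mem_insert_of_mem hG)
      (Finset.mem_insert_self _ _) (by rw [hGi, hFi])
    exact hFnot (hGF ▸ hG)
  have hfld : flagOf M d.support = S \ {i} := by
    ext j
    constructor
    · intro hj
      refine ⟨hflins ▸ Set.mem_insert_of_mem _ hj, ?_⟩
      simp only [Set.mem_singleton_iff]
      rintro rfl
      exact hinotin hj
    · rintro ⟨hjS, hji⟩
      simp only [Set.mem_singleton_iff] at hji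
      rcases (hflins ▸ hjS : j ∈ insert i (flagOf M d.support)) with h' | h'
      · exact absurd h' hji
      · exact h'
  exact h ⟨hsq, hch, hfld, hiS⟩

lemma psiF_mul_thetaP_eq_zero (S : Set ℕ) (b : Finset (FlatV M) → k)
    (hb : ∀ i ∈ S, ∀ C' : Finset (FlatV M), IsChainF M C' → flagOf M C' = S \ {i} →
      ∑ F ∈ Finset.univ.filter
          (fun F : FlatV M => mrk M F.1 = i ∧ IsChainF M (insert F C')),
        b (insert F C') = 0)
    (i : ℕ) (q : MvPolynomial (FlatV M) k) :
    psiF M S b (q * thetaP M i) = 0 := by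
  classical
  induction q using MvPolynomial.induction_on' with
  | monomial d c =>
    by_cases h : (∀ F, d F ≤ 1) ∧ IsChainF M d.support ∧ flagOf M d.support = S \ {i} ∧ i ∈ S
    · obtain ⟨hsq, hch, hfl, hiS⟩ := h
      rw [psiF_monomial_mul_theta_key S b hiS c hsq hch hfl, hb i hiS d.support hch hfl,
        mul_zero]
    · exact psiF_monomial_mul_theta_zero S b i d c h
  | add p q hp hq => rw [add_mul, map_add, hp, hq, add_zero]

lemma sum_good_eq_sum_chains (S : Set ℕ) (b : Finset (FlatV M) → k)
    {i : ℕ} (hiS : i ∈ S) {C' : Finset (FlatV M)} (hC' : IsChainF M C')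
    (hfl : flagOf M C' = S \ {i}) :
    ∑ F ∈ Finset.univ.filter
        (fun F : FlatV M => mrk M F.1 = i ∧ IsChainF M (insert F C')),
      b (insert F C') =
    ∑ D ∈ Finset.univ.filter
        (fun D : Finset (FlatV M) => IsChainF M D ∧ flagOf M D = S ∧ C' ⊆ D), b D := by
  classical
  have hinotin : i ∉ flagOf M C' := by rw [hfl]; simp
  refine Finset.sum_bij (fun F _ => insert F C') ?_ ?_ ?_ ?_
  · intro F hF
    rw [Finset.mem_filter] at hF ⊢
    exact ⟨Finset.mem_univ _, hF.2.2, flag_insert_eq S hiS hfl F hF.2.1,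
      Finset.subset_insert _ _⟩
  · intro F1 hF1 F2 hF2 h
    rw [Finset.mem_filter] at hF1 hF2
    have h1 : F1 ∉ C' := not_mem_of_rank_not_mem_flag hF1.2.1 hinotin
    have h' : insert F1 C' = insert F2 C' := h
    have : F1 ∈ insert F2 C' := by rw [← h']; exact Finset.mem_insert_self F1 C'
    rcases Finset.mem_insert.1 this with h' | h'
    · exact h'
    · exact absurd h' h1
  · intro D hD
    rw [Finset.mem_filter] at hD
    obtain ⟨-, hDch, hDfl, hCD⟩ := hD
    obtain ⟨F, hFD, hFi⟩ := mem_flagOf.1 (hDfl ▸ hiS)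
    have hFC' : F ∉ C' := not_mem_of_rank_not_mem_flag hFi hinotin
    have hsub : insert F C' ⊆ D := Finset.insert_subset hFD hCD
    have hDeq : insert F C' = D := by
      refine Finset.Subset.antisymm hsub fun G hG => ?_
      have hGS : mrk M G.1 ∈ S := hDfl ▸ mem_flagOf.2 ⟨G, hG, rfl⟩
      by_cases hGi : mrk M G.1 = i
      · have : G = F := hDch.rank_inj hG hFD (by rw [hGi, hFi])
        exact this ▸ Finset.mem_insert_self _ _
      · have : mrk M G.1 ∈ flagOf M C' := by
          rw [hfl]; exact ⟨hGS, by simpa using hGi⟩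
        obtain ⟨H, hH, hHG⟩ := mem_flagOf.1 this
        have : G = H := hDch.rank_inj hG (hCD hH) hHG.symm
        exact Finset.mem_insert_of_mem (this ▸ hH)
    refine ⟨F, ?_, hDeq⟩
    rw [Finset.mem_filter]
    exact ⟨Finset.mem_univ _, hFi, hDeq ▸ hDch⟩
  · intro F hF
    rfl

end Key
section Assemble
variable {k : Type*} [Field k] {α : Type*} [Fintype α] {M : Matroid α}

lemma finsum_chains (S : Set ℕ) (b : Finset (FlatV M) → k) (C' : Finset (FlatV M)) :
    ∑ᶠ D ∈ {D : Finset (FlatV M) | IsChainF M D ∧ flagOf M D = S ∧ C' ⊆ D}, b D =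
    ∑ D ∈ Finset.univ.filter
        (fun D : Finset (FlatV M) => IsChainF M D ∧ flagOf M D = S ∧ C' ⊆ D), b D := by
  classical
  rw [← finsum_mem_coe_finset]
  congr 1
  ext D
  simp

lemma theta_mul_xC (i : ℕ) {C' : Finset (FlatV M)} (h : i ∉ flagOf M C') :
    theta k M i * xC k M C' =
      ∑ F ∈ Finset.univ.filter
          (fun F : FlatV M => mrk M F.1 = i ∧ IsChainF M (insert F C')),
        xC k M (insert F C') := by
  classical
  have hR : ∑ F ∈ (Finset.univ.filter (fun F : FlatV M => mrk M F.1 = i)).filter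
        (fun F => IsChainF M (insert F C')), xC k M (insert F C') =
      ∑ F ∈ Finset.univ.filter (fun F : FlatV M => mrk M F.1 = i),
        if IsChainF M (insert F C') then xC k M (insert F C') else 0 :=
    Finset.sum_filter _ _
  rw [theta_eq_mk, xC, ← map_mul, mul_comm, ← monomial_indC, monomial_mul_thetaP,
    ← Finset.filter_filter, hR, map_sum]
  refine Finset.sum_congr rfl fun F hF => ?_
  rw [Finset.mem_filter] at hF
  have hFC' : F ∉ C' := not_mem_of_rank_not_mem_flag hF.2 h
  by_cases hch : IsChainF M (insert F C')
  · rw [if_pos hch, xC, ← monomial_indC, indC_insert hFC', add_comm]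
  · rw [if_neg hch]
    refine Ideal.Quotient.eq_zero_iff_mem.2 (monomial_mem_srMIdeal _ ?_)
    rw [support_add_single, indC_support]
    exact hch

end Assemble
/-- Let `M` be a matroid of rank `r+1` and `S ⊆ [r]`. A linear
functional `f = ∑_{fl(C)=S} b_C ε_C` on the degree-`S` component of `k[M]`
annihilates the degree-`S` component of the ideal `(θ_1, …, θ_r)` iff for every
`i ∈ S` and every chain `C'` of flag `S \ {i}`, the sum of `b_D` over all
chains `D` of flag `S` containing `C'` vanishes. -/
theorem stmt19 {k : Type*} [Field k] {α : Type*} [Fintype α] (M : Matroid α)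
    {r : ℕ} (hrk : mrk M M.E = r + 1) (S : Set ℕ) (hS : S ⊆ Set.Icc 1 r)
    (b : Finset (FlatV M) → k) (φ : SRM k M →ₗ[k] k)
    (hφ : ∀ C : Finset (FlatV M), IsChainF M C → flagOf M C = S →
      φ (xC k M C) = b C) :
    (∀ x ∈ Ideal.span {p : SRM k M | ∃ i ∈ Set.Icc 1 r, p = theta k M i},
        x ∈ degS k M S → φ x = 0) ↔
    (∀ i ∈ S, ∀ C' : Finset (FlatV M), IsChainF M C' → flagOf M C' = S \ {i} →
        ∑ᶠ D ∈ {D : Finset (FlatV M) | IsChainF M D ∧ flagOf M D = S ∧ C' ⊆ D},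
          b D = 0) := by
  classical
  constructor
  · intro hLHS i hiS C' hC' hfl
    have hinot : i ∉ flagOf M C' := by rw [hfl]; simp
    have hexp := theta_mul_xC (k := k) (M := M) i hinot
    have hxdeg : theta k M i * xC k M C' ∈ degS k M S := by
      rw [hexp]
      refine Submodule.sum_mem _ fun F hF => ?_
      rw [Finset.mem_filter] at hF
      exact Submodule.subset_span ⟨insert F C', hF.2.2, flag_insert_eq S hiS hfl F hF.2.1, rfl⟩
    have hxI : theta k M i * xC k M C' ∈
        Ideal.span {p : SRM k M | ∃ i ∈ Set.Icc 1 r, p = theta k M i} :=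
      Ideal.mul_mem_right _ _ (Ideal.subset_span ⟨i, hS hiS, rfl⟩)
    have h0 := hLHS _ hxI hxdeg
    rw [hexp, map_sum] at h0
    have hsum : ∑ F ∈ Finset.univ.filter
        (fun F : FlatV M => mrk M F.1 = i ∧ IsChainF M (insert F C')),
        b (insert F C') = 0 := by
      rw [← h0]
      refine Finset.sum_congr rfl fun F hF => ?_
      rw [Finset.mem_filter] at hF
      exact (hφ _ hF.2.2 (flag_insert_eq S hiS hfl F hF.2.1)).symm
    rw [finsum_chains, ← sum_good_eq_sum_chains S b hiS hC' hfl]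
    exact hsum
  · intro hb x hxI hxdeg
    have hphix : φ x = psiQ M S b x := by
      refine Submodule.span_induction ?_ ?_ ?_ ?_ hxdeg
      · rintro y ⟨C, hch, hfl, rfl⟩
        rw [hφ C hch hfl, xC, ← monomial_indC, psiQ_mk, psiF_monomial, indC_support,
          if_pos ⟨indC_sqf C, hch, hfl⟩, mul_one]
      · simp
      · intro u v _ _ hu hv; rw [map_add, map_add, hu, hv]
      · intro a u _ hu; rw [map_smul, map_smul, hu]
    rw [hphix]
    have hb' : ∀ i ∈ S, ∀ C' : Finset (FlatV M), IsChainF M C' → flagOf M C' = S \ {i} →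
        ∑ F ∈ Finset.univ.filter
            (fun F : FlatV M => mrk M F.1 = i ∧ IsChainF M (insert F C')),
          b (insert F C') = 0 := by
      intro i hiS C' hC' hfl
      have := hb i hiS C' hC' hfl
      rw [finsum_chains] at this
      rw [sum_good_eq_sum_chains S b hiS hC' hfl]
      exact this
    have main : ∀ y ∈ Ideal.span {p : SRM k M | ∃ i ∈ Set.Icc 1 r, p = theta k M i},
        ∀ z : SRM k M, psiQ M S b (z * y) = 0 := by
      intro y hy
      refine Submodule.span_induction ?_ ?_ ?_ ?_ hy
      · rintro p ⟨i, _, rfl⟩ z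
        obtain ⟨q, rfl⟩ := Ideal.Quotient.mk_surjective z
        rw [theta_eq_mk, ← map_mul, psiQ_mk]
        exact psiF_mul_thetaP_eq_zero S b hb' i q
      · intro z; rw [mul_zero, map_zero]
      · intro u v _ _ hu hv z; rw [mul_add, map_add, hu z, hv z, add_zero]
      · intro a u _ hu z; rw [smul_eq_mul, ← mul_assoc, hu]
    simpa using main x hxI 1
end
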